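/- arXiv:2603.29731 — 3 statements merged into one kernel-verified Lean document; each statement's English description precedes it below -/
import Mathlib

section
/- Let Φ be a real-valued C² function and a a C¹ function on (0,∞). Suppose M, C₁, C₂, m > 0 satisfy |Φ'(λ)| ≥ C₁ m and |Φ''(λ)| ≤ C₂ m/λ for all λ in the support of a, and supp a ⊂ [0, m/M]. Then there is C>0 depending only on C₁ and C₂ such that |∫₀^∞ a(λ) e^{iΦ(λ)} dλ| ≤ C M^{-1/2}(‖a‖_∞ + ‖λ∂_λ a‖_∞), provided the right-hand side is finite. -/
open Set MeasureTheory

/-- Quantitative (non-)stationary phase, case (i): if `|Φ'| ≥ C₁ m`, `|Φ''| ≤ C₂ m/λ`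
on the support of `a` and `supp a ⊆ [0, m/M]`, then
`|∫₀^∞ a e^{iΦ}| ≤ C M^{-1/2} (‖a‖_∞ + ‖λ ∂_λ a‖_∞)` with `C` depending only on `C₁, C₂`. -/
theorem quantitative_stationary_phase_one (C₁ C₂ : ℝ) (hC₁ : 0 < C₁) (hC₂ : 0 < C₂) :
    ∃ C > (0:ℝ), ∀ (Φ : ℝ → ℝ) (a : ℝ → ℂ),
      ContDiffOn ℝ 2 Φ (Ioi 0) → ContDiffOn ℝ 1 a (Ioi 0) →
      ∀ M m : ℝ, 0 < M → 0 < m →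
      (∀ l ∈ Function.support a, 0 < l → C₁ * m ≤ |deriv Φ l|) →
      (∀ l ∈ Function.support a, 0 < l → |deriv (deriv Φ) l| ≤ C₂ * m / l) →
      Function.support a ⊆ Icc 0 (m / M) →
      ∀ A B : ℝ, (∀ l ∈ Ioi (0:ℝ), ‖a l‖ ≤ A) →
        (∀ l ∈ Ioi (0:ℝ), l * ‖deriv a l‖ ≤ B) →
      ‖∫ l in Ioi (0:ℝ), a l * Complex.exp (Complex.I * (Φ l : ℂ))‖
        ≤ C * M ^ (-(1:ℝ)/2) * (A + B) := by
  refine ⟨1 + 3/C₁ + C₂/C₁^2, by positivity, ?_⟩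
  set C : ℝ := 1 + 3/C₁ + C₂/C₁^2 with hCdef
  have hC0 : 0 < C := by positivity
  intro Φ a hΦ ha M m hM hm hP1 hP2 hsupp A B hA hB
  -- basic notation
  set e : ℝ → ℂ := fun l => Complex.exp (Complex.I * (Φ l : ℂ)) with he
  set f : ℝ → ℂ := fun l => a l * e l with hf
  set g : ℝ → ℂ := fun l => a l / (Complex.I * Complex.ofReal (deriv Φ l)) with hg
  set s : ℝ := Real.sqrt M with hsdef
  have hs0 : 0 < s := Real.sqrt_pos.mpr hM
  have hsM : s * s = M := Real.mul_self_sqrt hM.le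
  have hMs : M ^ (-(1:ℝ)/2) = s⁻¹ := by
    rw [show (-(1:ℝ)/2) = -(1/2) by ring, Real.rpow_neg hM.le, ← Real.sqrt_eq_rpow]
  have hA0 : 0 ≤ A := le_trans (norm_nonneg _) (hA 1 (by norm_num))
  have hB0 : 0 ≤ B := le_trans (by positivity) (hB 1 (by norm_num))
  set K : ℝ := B/C₁ + A*C₂/C₁^2 with hKdef
  have hK0 : 0 ≤ K := by positivity
  set R : ℝ := m / M with hRdef
  have hR0 : 0 < R := by positivity
  set δ : ℝ := s⁻¹ with hδdef
  have hδ0 : 0 < δ := by positivity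
  -- norm of the exponential is 1
  have hnorme : ∀ l : ℝ, ‖e l‖ = 1 := by
    intro l
    rw [he]
    simp only []
    rw [mul_comm, Complex.norm_exp_ofReal_mul_I]
  -- differentiability facts
  have hΦd : DifferentiableOn ℝ Φ (Ioi 0) := hΦ.differentiableOn (by norm_num)
  have hΦ'c : ContDiffOn ℝ 1 (deriv Φ) (Ioi 0) :=
    hΦ.deriv_of_isOpen isOpen_Ioi (by norm_num)
  have hΦ'd : DifferentiableOn ℝ (deriv Φ) (Ioi 0) := hΦ'c.differentiableOn (by norm_num)
  have had : DifferentiableOn ℝ a (Ioi 0) := ha.differentiableOn (by norm_num)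
  have hac : ContinuousOn a (Ioi 0) := ha.continuousOn
  -- the bounds extend to the closed support
  have hts : ∀ x ∈ Ioi (0:ℝ), x ∈ tsupport a →
      C₁ * m ≤ |deriv Φ x| ∧ |deriv (deriv Φ) x| ≤ C₂ * m / x := by
    intro x hx hxs
    have hxcl : x ∈ closure (Function.support a ∩ Ioi 0) := by
      have h1 : Function.support a ⊆ (Function.support a ∩ Ioi 0) ∪ {0} := by
        intro y hy
        rcases lt_or_ge 0 y with h | h
        · exact Or.inl ⟨hy, h⟩
        · have := (hsupp hy).1
          exact Or.inr (mem_singleton_iff.mpr (le_antisymm h this))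
      have h2 : tsupport a ⊆ closure (Function.support a ∩ Ioi 0) ∪ {0} := by
        refine subset_trans (closure_mono h1) ?_
        rw [closure_union]
        exact union_subset_union subset_rfl (by simp)
      rcases h2 hxs with h | h
      · exact h
      · simp only [mem_singleton_iff] at h
        exact absurd h (ne_of_gt hx)
    haveI hne : (nhdsWithin x (Function.support a ∩ Ioi 0)).NeBot :=
      mem_closure_iff_nhdsWithin_neBot.mp hxcl
    constructor
    · have hcont : ContinuousAt (fun y => |deriv Φ y|) x :=
        ((hΦ'c.continuousOn.continuousAt (isOpen_Ioi.mem_nhds hx)).abs)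
      have ht : Filter.Tendsto (fun y => |deriv Φ y|)
          (nhdsWithin x (Function.support a ∩ Ioi 0)) (nhds |deriv Φ x|) :=
        hcont.tendsto.mono_left nhdsWithin_le_nhds
      refine ge_of_tendsto ht ?_
      filter_upwards [self_mem_nhdsWithin] with y hy
      exact hP1 y hy.1 hy.2
    · have hcont : ContinuousAt (fun y => |deriv (deriv Φ) y|) x := by
      -- deriv (deriv Φ) is continuous on Ioi 0
        have : ContinuousOn (deriv (deriv Φ)) (Ioi 0) :=
          hΦ'c.continuousOn_deriv_of_isOpen isOpen_Ioi le_rfl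
        exact (this.continuousAt (isOpen_Ioi.mem_nhds hx)).abs
      have hcont2 : ContinuousAt (fun y : ℝ => C₂ * m / y) x :=
        (continuousAt_const.div continuousAt_id (ne_of_gt hx))
      have ht : Filter.Tendsto (fun y => |deriv (deriv Φ) y|)
          (nhdsWithin x (Function.support a ∩ Ioi 0)) (nhds |deriv (deriv Φ) x|) :=
        hcont.tendsto.mono_left nhdsWithin_le_nhds
      have ht2 : Filter.Tendsto (fun y : ℝ => C₂ * m / y)
          (nhdsWithin x (Function.support a ∩ Ioi 0)) (nhds (C₂ * m / x)) :=
        hcont2.tendsto.mono_left nhdsWithin_le_nhds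
      refine le_of_tendsto_of_tendsto ht ht2 ?_
      filter_upwards [self_mem_nhdsWithin] with y hy
      exact hP2 y hy.1 hy.2
  -- the key derivative computation
  have key : ∀ x ∈ Ioi (0:ℝ),
      ‖deriv g x‖ ≤ K / (m * x) ∧ ‖g x‖ ≤ A / (C₁ * m) ∧
      HasDerivAt (fun l => g l * e l) (deriv g x * e x + a x * e x) x := by
    intro x hx
    have hΦx : HasDerivAt Φ (deriv Φ x) x :=
      (hΦd.differentiableAt (isOpen_Ioi.mem_nhds hx)).hasDerivAt
    have hex : HasDerivAt e (e x * (Complex.I * Complex.ofReal (deriv Φ x))) x := by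
      have h1 : HasDerivAt (fun l => Complex.I * (Φ l : ℂ))
          (Complex.I * Complex.ofReal (deriv Φ x)) x := by
        simpa using (hΦx.ofReal_comp.const_mul Complex.I)
      simpa [he] using h1.cexp
    by_cases hxs : x ∈ tsupport a
    · obtain ⟨h1, h2⟩ := hts x hx hxs
      have hp0 : 0 < |deriv Φ x| := lt_of_lt_of_le (by positivity) h1
      have hc0 : (Complex.I * Complex.ofReal (deriv Φ x)) ≠ 0 := by
        apply mul_ne_zero Complex.I_ne_zero
        exact Complex.ofReal_ne_zero.mpr (abs_pos.mp hp0)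
      have hx0 : (0:ℝ) < x := mem_Ioi.mp hx
      have hnc : ‖Complex.I * Complex.ofReal (deriv Φ x)‖ = |deriv Φ x| := by
        simp [norm_mul, Complex.norm_I, Complex.norm_real, Real.norm_eq_abs]
      have hnc' : ‖Complex.I * Complex.ofReal (deriv (deriv Φ) x)‖ = |deriv (deriv Φ) x| := by
        simp [norm_mul, Complex.norm_I, Complex.norm_real, Real.norm_eq_abs]
      have hax2 : ‖a x‖ ≤ A := hA x hx
      have ha'x : ‖deriv a x‖ ≤ B / x := by
        rw [le_div_iff₀ hx0, mul_comm]
        exact hB x hx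
      have haD : HasDerivAt a (deriv a x) x :=
        (had.differentiableAt (isOpen_Ioi.mem_nhds hx)).hasDerivAt
      have hΦ'x : HasDerivAt (deriv Φ) (deriv (deriv Φ) x) x :=
        (hΦ'd.differentiableAt (isOpen_Ioi.mem_nhds hx)).hasDerivAt
      have hcx : HasDerivAt (fun l => Complex.I * Complex.ofReal (deriv Φ l))
          (Complex.I * Complex.ofReal (deriv (deriv Φ) x)) x :=
        hΦ'x.ofReal_comp.const_mul Complex.I
      have hgd : HasDerivAt g
          ((deriv a x * (Complex.I * Complex.ofReal (deriv Φ x)) -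
            a x * (Complex.I * Complex.ofReal (deriv (deriv Φ) x))) /
            (Complex.I * Complex.ofReal (deriv Φ x))^2) x := haD.div hcx hc0
      have hCm : (0:ℝ) < C₁ * m := by positivity
      have hbound : ‖deriv g x‖ ≤ K / (m * x) := by
        rw [hgd.deriv, norm_div, norm_pow, hnc]
        calc ‖deriv a x * (Complex.I * Complex.ofReal (deriv Φ x)) -
              a x * (Complex.I * Complex.ofReal (deriv (deriv Φ) x))‖ / |deriv Φ x| ^ 2
            ≤ (‖deriv a x‖ * |deriv Φ x| + ‖a x‖ * |deriv (deriv Φ) x|) / |deriv Φ x| ^ 2 := by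
              gcongr
              refine le_trans (norm_sub_le _ _) (le_of_eq ?_)
              simp only [norm_mul, Complex.norm_I, Complex.norm_real, Real.norm_eq_abs, one_mul]
          _ = ‖deriv a x‖ / |deriv Φ x| + ‖a x‖ * |deriv (deriv Φ) x| / |deriv Φ x| ^ 2 := by
              rw [add_div, pow_two, mul_div_mul_right _ _ (ne_of_gt hp0), ← pow_two]
          _ ≤ (B / x) / (C₁ * m) + A * (C₂ * m / x) / (C₁ * m) ^ 2 := by
              have t1 : ‖deriv a x‖ / |deriv Φ x| ≤ (B / x) / (C₁ * m) :=
                div_le_div₀ (by positivity) ha'x hCm h1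
              have t2 : ‖a x‖ * |deriv (deriv Φ) x| / |deriv Φ x| ^ 2 ≤
                  A * (C₂ * m / x) / (C₁ * m) ^ 2 :=
                div_le_div₀ (by positivity)
                  (mul_le_mul hax2 h2 (abs_nonneg _) hA0) (by positivity)
                  (pow_le_pow_left₀ hCm.le h1 2)
              linarith
          _ = K / (m * x) := by
              rw [hKdef]
              field_simp
      have hgnorm : ‖g x‖ ≤ A / (C₁ * m) := by
        have : ‖g x‖ = ‖a x‖ / |deriv Φ x| := by
          simp only [hg, norm_div, hnc]
        rw [this]
        gcongr
      refine ⟨hbound, hgnorm, ?_⟩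
      have h3 := hgd.mul hex
      have hgc : g x * (e x * (Complex.I * Complex.ofReal (deriv Φ x))) = a x * e x := by
        simp only [hg]
        have hne : ((deriv Φ x : ℝ) : ℂ) ≠ 0 := Complex.ofReal_ne_zero.mpr (abs_pos.mp hp0)
        field_simp
      rw [hgd.deriv, ← hgc]
      exact h3
    · have hopen : IsOpen (tsupport a)ᶜ := (isClosed_tsupport a).isOpen_compl
      have hev : ∀ᶠ y in nhds x, a y = 0 := by
        filter_upwards [hopen.mem_nhds hxs] with y hy
        exact image_eq_zero_of_notMem_tsupport hy
      have hgev : g =ᶠ[nhds x] (fun _ => (0:ℂ)) := by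
        filter_upwards [hev] with y hy
        simp [hg, hy]
      have hgd : HasDerivAt g 0 x :=
        (hasDerivAt_const x (0:ℂ)).congr_of_eventuallyEq hgev
      have hgderiv : deriv g x = 0 := by
        rw [hgev.deriv_eq]; simp
      have hax : a x = 0 := image_eq_zero_of_notMem_tsupport hxs
      have hgx : g x = 0 := by simp [hg, hax]
      refine ⟨?_, ?_, ?_⟩
      · rw [hgderiv, norm_zero]
        exact div_nonneg hK0 (mul_nonneg hm.le (le_of_lt (mem_Ioi.mp hx)))
      · rw [hgx, norm_zero]
        positivity
      · have := hgd.mul hex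
        simp [hgderiv, hgx, hax] at this ⊢
        exact this
  -- the goal integral is the integral of f
  have hgoal : (∫ l in Ioi (0:ℝ), a l * Complex.exp (Complex.I * (Φ l : ℂ)))
      = ∫ l in Ioi (0:ℝ), f l := rfl
  have hRHS0 : 0 ≤ C * M ^ (-(1:ℝ)/2) * (A + B) := by
    rw [hMs]
    have : (0:ℝ) ≤ A + B := by linarith
    positivity
  have hfc : ContinuousOn f (Ioi 0) :=
    hac.mul (Complex.continuous_exp.comp_continuousOn
      (continuousOn_const.mul (Complex.continuous_ofReal.comp_continuousOn hΦ.continuousOn)))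
  by_cases hint : IntegrableOn f (Ioi 0) volume
  swap
  · rw [hgoal, integral_undef hint, norm_zero]
    exact hRHS0
  have hfz : ∀ l, R < l → f l = 0 := by
    intro l hl
    have hal : a l = 0 := by
      by_contra hcon
      exact absurd ((hsupp (Function.mem_support.mpr hcon)).2) (not_le.mpr hl)
    simp [hf, hal]
  have hsplit : ∀ T, 0 < T → R ≤ T → (∫ l in Ioi (0:ℝ), f l) = ∫ l in Ioc 0 T, f l := by
    intro T hT0 hRT
    have hunion : Ioc (0:ℝ) T ∪ Ioi T = Ioi 0 := Ioc_union_Ioi_eq_Ioi hT0.le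
    rw [← hunion, setIntegral_union Ioc_disjoint_Ioi_same measurableSet_Ioi
      (hint.mono_set (by rw [← hunion]; exact subset_union_left))
      (hint.mono_set (by rw [← hunion]; exact subset_union_right)),
      setIntegral_eq_zero_of_forall_eq_zero
        (fun x hx => hfz x (lt_of_le_of_lt hRT (mem_Ioi.mp hx)))]
    ring
  have hIoc : ∀ T, 0 ≤ T → ‖∫ l in Ioc (0:ℝ) T, f l‖ ≤ A * T := by
    intro T hT
    have hb : ∀ x ∈ Ioc (0:ℝ) T, ‖f x‖ ≤ A := by
      intro x hx
      rw [hf]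
      simp only []
      rw [norm_mul, hnorme, mul_one]
      exact hA x (mem_Ioi.mpr hx.1)
    have := norm_setIntegral_le_of_norm_le_const (μ := volume) (s := Ioc (0:ℝ) T)
      (by rw [Real.volume_Ioc]; exact ENNReal.ofReal_lt_top) hb
    rw [Real.volume_real_Ioc_of_le hT] at this
    calc ‖∫ l in Ioc (0:ℝ) T, f l‖ ≤ A * (T - 0) := this
      _ = A * T := by ring
  have hC1 : (1:ℝ) ≤ C := by
    rw [hCdef]
    have h1 : (0:ℝ) < 3/C₁ := by positivity
    have h2 : (0:ℝ) < C₂/C₁^2 := by positivity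
    linarith
  rcases le_or_gt R δ with hcase | hcase
  · -- trivial case: the support is tiny
    rw [hgoal, hsplit δ hδ0 hcase]
    refine le_trans (hIoc δ hδ0.le) ?_
    rw [hMs]
    have hAC : A ≤ C * (A + B) := by
      calc A ≤ A + B := by linarith
        _ = 1 * (A + B) := by ring
        _ ≤ C * (A + B) := by
            apply mul_le_mul_of_nonneg_right hC1
            linarith
    calc A * δ ≤ (C * (A + B)) * δ := mul_le_mul_of_nonneg_right hAC hδ0.le
      _ = C * δ * (A + B) := by ring
  · -- main case: integrate by parts on [δ, R]
    have hsm : s < m := by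
      have h' : s⁻¹ * M < m := by
        rw [← lt_div_iff₀ hM]
        exact hcase
      have h'' : s⁻¹ * M = s := by
        rw [← hsM]
        field_simp
      linarith [h''.symm.trans_lt h']
    have hIccsub : uIcc δ R ⊆ Ioi (0:ℝ) := by
      rw [uIcc_of_le hcase.le]
      exact fun x hx => mem_Ioi.mpr (lt_of_lt_of_le hδ0 hx.1)
    have hecont : ContinuousOn e (uIcc δ R) := by
      have hΦcont : ContinuousOn (fun l => Complex.I * Complex.ofReal (Φ l)) (uIcc δ R) :=
        continuousOn_const.mul
          (Complex.continuous_ofReal.comp_continuousOn (hΦ.continuousOn.mono hIccsub))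
      exact Complex.continuous_exp.comp_continuousOn hΦcont
    have hcontf : ContinuousOn f (uIcc δ R) := (hac.mono hIccsub).mul hecont
    have hfint2 : IntervalIntegrable f volume δ R := hcontf.intervalIntegrable
    have hmeas : AEStronglyMeasurable (fun l => deriv g l * e l)
        (volume.restrict (Ioc δ R)) := by
      refine AEStronglyMeasurable.mul ((measurable_deriv g).aestronglyMeasurable) ?_
      exact (hecont.mono (by rw [uIcc_of_le hcase.le]; exact Ioc_subset_Icc_self)).aestronglyMeasurable
        measurableSet_Ioc
    have hbnd : ∀ l ∈ Ioc δ R, ‖deriv g l * e l‖ ≤ K / (m * δ) := by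
      intro l hl
      have hl0 : l ∈ Ioi (0:ℝ) := mem_Ioi.mpr (lt_trans hδ0 hl.1)
      rw [norm_mul, hnorme, mul_one]
      refine le_trans (key l hl0).1 ?_
      gcongr
      exact hl.1.le
    have hgeint : IntervalIntegrable (fun l => deriv g l * e l) volume δ R := by
      rw [intervalIntegrable_iff_integrableOn_Ioc_of_le hcase.le]
      refine Integrable.mono' (g := fun _ => K / (m * δ))
        (integrableOn_const measure_Ioc_lt_top.ne) hmeas ?_
      rw [ae_restrict_iff' measurableSet_Ioc]
      filter_upwards with l hl
      exact hbnd l hl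
    have hftc0 : (∫ l in δ..R, (deriv g l * e l + a l * e l))
        = (fun l => g l * e l) R - (fun l => g l * e l) δ :=
      intervalIntegral.integral_eq_sub_of_hasDerivAt
        (fun x hx => (key x (hIccsub hx)).2.2) (hgeint.add hfint2)
    have hftc : (∫ l in δ..R, (deriv g l * e l + a l * e l))
        = g R * e R - g δ * e δ := hftc0
    have hsplit2 : (∫ l in δ..R, f l)
        = (g R * e R - g δ * e δ) - ∫ l in δ..R, deriv g l * e l := by
      rw [← hftc, intervalIntegral.integral_add hgeint hfint2]
      ring
    have hnorm2 : ‖∫ l in δ..R, deriv g l * e l‖ ≤ K / (m * δ) * |R - δ| := by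
      apply intervalIntegral.norm_integral_le_of_norm_le_const
      intro x hx
      rw [uIoc_of_le hcase.le] at hx
      exact hbnd x hx
    have hgR : ‖g R * e R‖ ≤ A / (C₁ * m) := by
      rw [norm_mul, hnorme, mul_one]
      exact (key R (mem_Ioi.mpr hR0)).2.1
    have hgδ : ‖g δ * e δ‖ ≤ A / (C₁ * m) := by
      rw [norm_mul, hnorme, mul_one]
      exact (key δ (mem_Ioi.mpr hδ0)).2.1
    have ht3 : K / (m * δ) * |R - δ| ≤ K / s := by
      rw [abs_of_nonneg (by linarith : (0:ℝ) ≤ R - δ)]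
      have hstep : K / (m * δ) * (R - δ) ≤ K / (m * δ) * R :=
        mul_le_mul_of_nonneg_left (by linarith) (by positivity)
      refine le_trans hstep (le_of_eq ?_)
      rw [hδdef, hRdef, ← hsM]
      field_simp [hs0.ne', hm.ne']
    have ht4 : A / (C₁ * m) ≤ A / (C₁ * s) := by
      gcongr
    have hI2 : ‖∫ l in δ..R, f l‖ ≤ A / (C₁ * s) + A / (C₁ * s) + K / s := by
      rw [hsplit2]
      calc ‖(g R * e R - g δ * e δ) - ∫ l in δ..R, deriv g l * e l‖
          ≤ ‖g R * e R - g δ * e δ‖ + ‖∫ l in δ..R, deriv g l * e l‖ := norm_sub_le _ _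
        _ ≤ (‖g R * e R‖ + ‖g δ * e δ‖) + K / (m * δ) * |R - δ| :=
            add_le_add (norm_sub_le _ _) hnorm2
        _ ≤ (A / (C₁ * s) + A / (C₁ * s)) + K / s :=
            add_le_add (add_le_add (le_trans hgR ht4) (le_trans hgδ ht4)) ht3
        _ = A / (C₁ * s) + A / (C₁ * s) + K / s := by ring
    -- combine everything
    have hun2 : Ioc (0:ℝ) δ ∪ Ioc δ R = Ioc 0 R := Ioc_union_Ioc_eq_Ioc hδ0.le hcase.le
    have hIocR : (∫ l in Ioc (0:ℝ) R, f l)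
        = (∫ l in Ioc (0:ℝ) δ, f l) + ∫ l in Ioc δ R, f l := by
      rw [← hun2, setIntegral_union (Ioc_disjoint_Ioc_of_le le_rfl) measurableSet_Ioc
        (hint.mono_set (fun x hx => mem_Ioi.mpr hx.1))
        (hint.mono_set (fun x hx => mem_Ioi.mpr (lt_trans hδ0 hx.1)))]
    have hIocInterval : (∫ l in Ioc δ R, f l) = ∫ l in δ..R, f l :=
      (intervalIntegral.integral_of_le hcase.le).symm
    have hfinal : A + 2*(A/C₁) + K ≤ C * (A + B) := by
      rw [hKdef, hCdef]
      have e1 : (1 + 3/C₁ + C₂/C₁^2) * (A+B) - (A + 2*(A/C₁) + (B/C₁ + A*C₂/C₁^2))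
          = A/C₁ + B + 2*(B/C₁) + B*C₂/C₁^2 := by
        field_simp
        ring
      have n1 : (0:ℝ) ≤ A/C₁ := by positivity
      have n2 : (0:ℝ) ≤ B/C₁ := by positivity
      have n3 : (0:ℝ) ≤ B*C₂/C₁^2 := by positivity
      linarith
    rw [hgoal, hsplit R hR0 le_rfl, hIocR, hMs]
    calc ‖(∫ l in Ioc (0:ℝ) δ, f l) + ∫ l in Ioc δ R, f l‖
        ≤ ‖∫ l in Ioc (0:ℝ) δ, f l‖ + ‖∫ l in Ioc δ R, f l‖ := norm_add_le _ _
      _ ≤ A * δ + (A / (C₁ * s) + A / (C₁ * s) + K / s) :=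
          add_le_add (hIoc δ hδ0.le) (by rw [hIocInterval]; exact hI2)
      _ = (A + 2*(A/C₁) + K) / s := by
          rw [hδdef]
          field_simp [hs0.ne', hC₁.ne']
          ring
      _ ≤ (C * (A + B)) / s := (div_le_div_iff_of_pos_right hs0).mpr hfinal
      _ = C * δ * (A + B) := by
          rw [hδdef]
          ring
end

section
/- Let Φ be a real-valued C² function and a a C¹ function on (0,∞). Suppose M, C₁, C₂, m > 0 satisfy |Φ'(λ)| ≥ C₁ M|λ−m| and |Φ''(λ)| ≤ C₂ M for all λ in the support of a. Then there is C>0 depending only on C₁ and C₂ such that |∫₀^∞ a(λ) e^{iΦ(λ)} dλ| ≤ C M^{-1/2}(‖a‖_∞ + ‖λ∂_λ a‖_∞), provided the right-hand side is finite. -/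
open Set MeasureTheory

noncomputable def phE (Φ : ℝ → ℝ) (x : ℝ) : ℂ := Complex.exp (Complex.I * (Φ x : ℂ))

noncomputable def spF (Φ : ℝ → ℝ) (a : ℝ → ℂ) (x : ℝ) : ℂ :=
  a x / (Complex.I * ((deriv Φ x : ℝ) : ℂ)) * phE Φ x

noncomputable def spR (Φ : ℝ → ℝ) (a : ℝ → ℂ) (x : ℝ) : ℂ :=
  ((deriv a x * (Complex.I * ((deriv Φ x : ℝ) : ℂ)) - a x * (Complex.I * ((deriv (deriv Φ) x : ℝ) : ℂ)))
    / (Complex.I * ((deriv Φ x : ℝ) : ℂ)) ^ 2) * phE Φ x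

lemma norm_phE (Φ : ℝ → ℝ) (x : ℝ) : ‖phE Φ x‖ = 1 := by
  simp [phE, Complex.norm_exp]

lemma closure_transfer {a : ℝ → ℂ} {g h : ℝ → ℝ}
    (hg : ContinuousOn g (Ioi 0)) (hh : ContinuousOn h (Ioi 0))
    (hle : ∀ x ∈ Function.support a, 0 < x → g x ≤ h x)
    {x : ℝ} (hx : 0 < x) (hcl : x ∈ closure (Function.support a)) : g x ≤ h x := by
  set S := Function.support a ∩ Ioi 0 with hS
  have hxS : x ∈ closure S := by
    rw [mem_closure_iff_nhds] at hcl ⊢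
    intro U hU
    obtain ⟨V, hV⟩ := hcl (U ∩ Ioi 0) (Filter.inter_mem hU (Ioi_mem_nhds hx))
    exact ⟨V, ⟨hV.1.1, hV.2, hV.1.2⟩⟩
  have hne : (nhdsWithin x S).NeBot := mem_closure_iff_nhdsWithin_neBot.1 hxS
  have hgx : Filter.Tendsto g (nhdsWithin x S) (nhds (g x)) :=
    ((hg.continuousAt (Ioi_mem_nhds hx)).continuousWithinAt).mono (by
      intro y hy; exact hy.2)
  have hhx : Filter.Tendsto h (nhdsWithin x S) (nhds (h x)) :=
    ((hh.continuousAt (Ioi_mem_nhds hx)).continuousWithinAt).mono (by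
      intro y hy; exact hy.2)
  refine le_of_tendsto_of_tendsto hgx hhx ?_
  filter_upwards [self_mem_nhdsWithin] with y hy
  exact hle y hy.1 hy.2

lemma key_pointwise
    (C₁ C₂ M m A B : ℝ) (hC₁ : 0 < C₁) (hC₂ : 0 < C₂) (hM : 0 < M)
    (Φ : ℝ → ℝ) (a : ℝ → ℂ)
    (hΦ : ContDiffOn ℝ 2 Φ (Ioi 0)) (ha : ContDiffOn ℝ 1 a (Ioi 0))
    (h1 : ∀ l ∈ Function.support a, 0 < l → C₁*M*|l-m| ≤ |deriv Φ l|)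
    (h2 : ∀ l ∈ Function.support a, 0 < l → |deriv (deriv Φ) l| ≤ C₂*M)
    (hA : ∀ l ∈ Ioi (0:ℝ), ‖a l‖ ≤ A) (hB : ∀ l ∈ Ioi (0:ℝ), l*‖deriv a l‖ ≤ B)
    (hA0 : 0 ≤ A) (hB0 : 0 ≤ B)
    {x : ℝ} (hx : (0:ℝ) < x) (hxm : x ≠ m) :
    HasDerivAt (spF Φ a) (a x * phE Φ x + spR Φ a x) x ∧
    ‖spR Φ a x‖ ≤ B/(x*(C₁*M*|x-m|)) + A*C₂*M/(C₁*M*|x-m|)^2 ∧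
    ContinuousAt (spR Φ a) x := by
  have hQ : 0 < C₁*M*|x-m| :=
    mul_pos (mul_pos hC₁ hM) (abs_pos.2 (sub_ne_zero.2 hxm))
  have hΦ1 : ContDiffOn ℝ 1 (deriv Φ) (Ioi 0) := hΦ.deriv_of_isOpen isOpen_Ioi (by norm_num)
  have hca := ha.continuousOn
  have hca' := ha.continuousOn_deriv_of_isOpen isOpen_Ioi le_rfl
  have hcΦ := hΦ.continuousOn
  have hcΦ' := hΦ1.continuousOn
  have hcΦ'' := hΦ1.continuousOn_deriv_of_isOpen isOpen_Ioi le_rfl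
  have hnb : Ioi (0:ℝ) ∈ nhds x := Ioi_mem_nhds hx
  by_cases hcl : x ∈ closure (Function.support a)
  · -- near the support
    have hlow : C₁*M*|x-m| ≤ |deriv Φ x| := by
      refine closure_transfer (g := fun y => C₁*M*|y-m|) (h := fun y => |deriv Φ y|)
        ?_ hcΦ'.abs h1 hx hcl
      exact (continuous_const.mul ((continuous_id.sub continuous_const).abs)).continuousOn
    have hhigh : |deriv (deriv Φ) x| ≤ C₂*M := by
      refine closure_transfer (g := fun y => |deriv (deriv Φ) y|) (h := fun _ => C₂*M)
        hcΦ''.abs continuousOn_const h2 hx hcl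
    have hΦ'ne : deriv Φ x ≠ 0 := abs_pos.1 (lt_of_lt_of_le hQ hlow)
    have hden : Complex.I * ((deriv Φ x : ℝ):ℂ) ≠ 0 :=
      mul_ne_zero Complex.I_ne_zero (Complex.ofReal_ne_zero.2 hΦ'ne)
    have hdax : HasDerivAt a (deriv a x) x :=
      ((ha.differentiableOn one_ne_zero).differentiableAt hnb).hasDerivAt
    have hdΦx : HasDerivAt Φ (deriv Φ x) x :=
      ((hΦ.differentiableOn (by norm_num)).differentiableAt hnb).hasDerivAt
    have hdΦ'x : HasDerivAt (deriv Φ) (deriv (deriv Φ) x) x :=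
      ((hΦ1.differentiableOn one_ne_zero).differentiableAt hnb).hasDerivAt
    have hdenD : HasDerivAt (fun y => Complex.I * ((deriv Φ y : ℝ):ℂ))
        (Complex.I * ((deriv (deriv Φ) x : ℝ):ℂ)) x :=
      (hdΦ'x.ofReal_comp).const_mul Complex.I
    have hE : HasDerivAt (phE Φ) (Complex.I * ((deriv Φ x : ℝ) : ℂ) * phE Φ x) x := by
      have h0 : HasDerivAt (fun y => Complex.I * ((Φ y : ℝ) : ℂ))
          (Complex.I * ((deriv Φ x : ℝ) : ℂ)) x := (hdΦx.ofReal_comp).const_mul Complex.I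
      have := h0.cexp
      rw [mul_comm] at this
      exact this
    have hquot := hdax.div hdenD hden
    have hder : HasDerivAt (spF Φ a) (a x * phE Φ x + spR Φ a x) x := by
      have h3 := hquot.mul hE
      refine HasDerivAt.congr_deriv (by exact h3) ?_
      unfold spR
      simp only [Pi.div_apply]
      have hc : ((deriv Φ x : ℝ):ℂ) ≠ 0 := Complex.ofReal_ne_zero.2 hΦ'ne
      field_simp
      ring
    have hax : ‖a x‖ ≤ A := hA x hx
    have hax' : ‖deriv a x‖ ≤ B / x := by
      rw [le_div_iff₀ hx, mul_comm]
      exact hB x hx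
    have hΦ'pos : 0 < |deriv Φ x| := lt_of_lt_of_le hQ hlow
    have hbound : ‖spR Φ a x‖ ≤ B/(x*(C₁*M*|x-m|)) + A*C₂*M/(C₁*M*|x-m|)^2 := by
      have hnum : ‖deriv a x * (Complex.I * ((deriv Φ x : ℝ):ℂ))
          - a x * (Complex.I * ((deriv (deriv Φ) x : ℝ):ℂ))‖
          ≤ ‖deriv a x‖ * |deriv Φ x| + A*(C₂*M) := by
        refine (norm_sub_le _ _).trans ?_
        gcongr
        · simp [Complex.norm_I, Real.norm_eq_abs]
        · calc ‖a x * (Complex.I * ((deriv (deriv Φ) x : ℝ):ℂ))‖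
              = ‖a x‖ * |deriv (deriv Φ) x| := by
                simp [Complex.norm_I, Real.norm_eq_abs]
            _ ≤ A * (C₂*M) := by
                exact mul_le_mul hax hhigh (abs_nonneg _) hA0
      have hRnorm : ‖spR Φ a x‖ = ‖deriv a x * (Complex.I * ((deriv Φ x : ℝ):ℂ))
          - a x * (Complex.I * ((deriv (deriv Φ) x : ℝ):ℂ))‖ / |deriv Φ x|^2 := by
        rw [spR, norm_mul, norm_phE, mul_one, norm_div, norm_pow]
        simp [Complex.norm_I, Real.norm_eq_abs]
      rw [hRnorm]
      calc ‖deriv a x * (Complex.I * ((deriv Φ x : ℝ):ℂ))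
            - a x * (Complex.I * ((deriv (deriv Φ) x : ℝ):ℂ))‖ / |deriv Φ x|^2
          ≤ (‖deriv a x‖ * |deriv Φ x| + A*(C₂*M)) / |deriv Φ x|^2 := by gcongr
        _ = ‖deriv a x‖ / |deriv Φ x| + A*(C₂*M)/|deriv Φ x|^2 := by
            rw [add_div, sq, mul_div_mul_right _ _ (abs_ne_zero.mpr hΦ'ne)]
        _ ≤ (B/x) / (C₁*M*|x-m|) + A*(C₂*M)/(C₁*M*|x-m|)^2 := by
            have t1 : ‖deriv a x‖/|deriv Φ x| ≤ (B/x)/(C₁*M*|x-m|) :=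
              div_le_div₀ (div_nonneg hB0 hx.le) hax' hQ hlow
            have t2 : A*(C₂*M)/|deriv Φ x|^2 ≤ A*(C₂*M)/(C₁*M*|x-m|)^2 := by
              have := mul_nonneg (mul_nonneg hA0 hC₂.le) hM.le
              gcongr
            linarith
        _ = B/(x*(C₁*M*|x-m|)) + A*C₂*M/(C₁*M*|x-m|)^2 := by
            rw [div_div]
            ring_nf
    have hcont : ContinuousAt (spR Φ a) x := by
      have c1 : ContinuousAt (fun y => Complex.I * ((deriv Φ y : ℝ):ℂ)) x :=
        continuousAt_const.mul (Complex.continuous_ofReal.continuousAt.comp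
          (hcΦ'.continuousAt hnb))
      have c2 : ContinuousAt (fun y => Complex.I * ((deriv (deriv Φ) y : ℝ):ℂ)) x :=
        continuousAt_const.mul (Complex.continuous_ofReal.continuousAt.comp
          (hcΦ''.continuousAt hnb))
      have c3 : ContinuousAt a x := hca.continuousAt hnb
      have c4 : ContinuousAt (deriv a) x := hca'.continuousAt hnb
      have c5 : ContinuousAt (phE Φ) x := by
        refine Complex.continuous_exp.continuousAt.comp ?_
        exact continuousAt_const.mul (Complex.continuous_ofReal.continuousAt.comp
          (hcΦ.continuousAt hnb))
      exact (((c4.mul c1).sub (c3.mul c2)).div (c1.pow 2) (pow_ne_zero 2 hden)).mul c5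
    exact ⟨hder, hbound, hcont⟩
  · -- away from the closure of the support
    have hop : IsOpen (closure (Function.support a))ᶜ := isClosed_closure.isOpen_compl
    have hda0 : ∀ y ∈ (closure (Function.support a))ᶜ, a y = 0 ∧ deriv a y = 0 := by
      intro y hy
      have hmem : (closure (Function.support a))ᶜ ∈ nhds y := hop.mem_nhds hy
      have hev : ∀ᶠ z in nhds y, a z = 0 := by
        filter_upwards [hmem] with z hz
        exact Function.notMem_support.mp (fun hs => hz (subset_closure hs))
      have h0 : deriv a y = deriv (fun _ => (0:ℂ)) y := Filter.EventuallyEq.deriv_eq hev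
      exact ⟨hev.self_of_nhds, by rw [h0, deriv_const]⟩
    have hmem : (closure (Function.support a))ᶜ ∈ nhds x := hop.mem_nhds hcl
    have hspR0 : ∀ᶠ y in nhds x, spR Φ a y = 0 := by
      filter_upwards [hmem] with y hy
      simp [spR, (hda0 y hy).1, (hda0 y hy).2]
    have hspF0 : spF Φ a =ᶠ[nhds x] fun _ => 0 := by
      filter_upwards [hmem] with y hy
      simp [spF, (hda0 y hy).1]
    have hder0 : HasDerivAt (spF Φ a) 0 x :=
      (hasDerivAt_const x (0:ℂ)).congr_of_eventuallyEq hspF0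
    have hax0 : a x = 0 := (hda0 x hcl).1
    have hRx0 : spR Φ a x = 0 := hspR0.self_of_nhds
    refine ⟨by rw [hax0, hRx0]; simpa using hder0, ?_, ?_⟩
    · rw [hRx0]
      simp only [norm_zero]
      have e1 : (0:ℝ) ≤ B/(x*(C₁*M*|x-m|)) := div_nonneg hB0 (by positivity)
      have e2 : (0:ℝ) ≤ A*C₂*M/(C₁*M*|x-m|)^2 :=
        div_nonneg (mul_nonneg (mul_nonneg hA0 hC₂.le) hM.le) (by positivity)
      linarith
    · have hefq : spR Φ a =ᶠ[nhds x] (fun _ => (0:ℂ)) := hspR0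
      exact continuousAt_const.congr hefq.symm

lemma integral_inv_sq_sub (m c d : ℝ) (hcd : c ≤ d) (hm : m ∉ Icc c d) :
    ∫ x in c..d, ((x-m)^2)⁻¹ = (c-m)⁻¹ - (d-m)⁻¹ := by
  have hne : ∀ x ∈ Icc c d, x - m ≠ 0 := fun x hx =>
    sub_ne_zero.2 (fun h => hm (h ▸ hx))
  have hderiv : ∀ x ∈ uIcc c d, HasDerivAt (fun y => -(y-m)⁻¹) (((x-m)^2)⁻¹) x := by
    intro x hx
    rw [uIcc_of_le hcd] at hx
    have h1 : HasDerivAt (fun y : ℝ => y - m) 1 x := (hasDerivAt_id x).sub_const m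
    have h2 := (hasDerivAt_inv (hne x hx)).comp x h1
    have h3 := h2.neg
    simp at h3
    exact h3
  have hcont : ContinuousOn (fun x : ℝ => ((x-m)^2)⁻¹) (uIcc c d) := by
    rw [uIcc_of_le hcd]
    exact ContinuousOn.inv₀ (((continuous_id.sub continuous_const).pow 2).continuousOn)
      (fun x hx => pow_ne_zero 2 (hne x hx))
  rw [intervalIntegral.integral_eq_sub_of_hasDerivAt hderiv (hcont.intervalIntegrable)]
  ring

lemma ibp_interval
    (C₁ C₂ M m A B : ℝ) (hC₁ : 0 < C₁) (hC₂ : 0 < C₂) (hM : 0 < M)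
    (Φ : ℝ → ℝ) (a : ℝ → ℂ)
    (hΦ : ContDiffOn ℝ 2 Φ (Ioi 0)) (ha : ContDiffOn ℝ 1 a (Ioi 0))
    (h1 : ∀ l ∈ Function.support a, 0 < l → C₁*M*|l-m| ≤ |deriv Φ l|)
    (h2 : ∀ l ∈ Function.support a, 0 < l → |deriv (deriv Φ) l| ≤ C₂*M)
    (hA : ∀ l ∈ Ioi (0:ℝ), ‖a l‖ ≤ A) (hB : ∀ l ∈ Ioi (0:ℝ), l*‖deriv a l‖ ≤ B)
    (hA0 : 0 ≤ A) (hB0 : 0 ≤ B)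
    (c d : ℝ) (hc : 0 < c) (hcd : c ≤ d) (hm : m ∉ Icc c d) :
    ‖∫ x in c..d, a x * phE Φ x‖ ≤ A/(C₁*M*|c-m|) + A/(C₁*M*|d-m|)
      + ∫ x in c..d, (B/(x*(C₁*M*|x-m|)) + A*C₂*M/(C₁*M*|x-m|)^2) := by
  have hsub : Icc c d ⊆ Ioi 0 := fun x hx => lt_of_lt_of_le hc hx.1
  have hkey := fun (x : ℝ) (hx : x ∈ Icc c d) =>
    key_pointwise C₁ C₂ M m A B hC₁ hC₂ hM Φ a hΦ ha h1 h2 hA hB hA0 hB0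
      (hsub hx) (fun h => hm (h ▸ hx))
  have hQpos : ∀ x ∈ Icc c d, 0 < C₁*M*|x-m| := fun x hx =>
    mul_pos (mul_pos hC₁ hM) (abs_pos.2 (sub_ne_zero.2 (fun h => hm (h ▸ hx))))
  have hcontR : ContinuousOn (spR Φ a) (Icc c d) := fun x hx =>
    ((hkey x hx).2.2).continuousWithinAt
  have hcontaE : ContinuousOn (fun x => a x * phE Φ x) (Icc c d) := by
    refine (ha.continuousOn.mono hsub).mul ?_
    exact Complex.continuous_exp.comp_continuousOn
      ((continuous_const.mul Complex.continuous_ofReal).comp_continuousOn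
        (hΦ.continuousOn.mono hsub))
  have hIntR : IntervalIntegrable (spR Φ a) volume c d := by
    apply ContinuousOn.intervalIntegrable; rwa [uIcc_of_le hcd]
  have hIntaE : IntervalIntegrable (fun x => a x * phE Φ x) volume c d := by
    apply ContinuousOn.intervalIntegrable; rwa [uIcc_of_le hcd]
  have hFTC : ∫ x in c..d, (a x * phE Φ x + spR Φ a x) = spF Φ a d - spF Φ a c :=
    intervalIntegral.integral_eq_sub_of_hasDerivAt
      (fun x hx => by rw [uIcc_of_le hcd] at hx; exact (hkey x hx).1)
      (hIntaE.add hIntR)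
  rw [intervalIntegral.integral_add hIntaE hIntR] at hFTC
  have hsplit : ∫ x in c..d, a x * phE Φ x
      = spF Φ a d - spF Φ a c - ∫ x in c..d, spR Φ a x := by
    rw [← hFTC]; ring
  have hF : ∀ y, 0 < y → y ≠ m → ‖spF Φ a y‖ ≤ A/(C₁*M*|y-m|) := by
    intro y hy hym
    have hQy : 0 < C₁*M*|y-m| := mul_pos (mul_pos hC₁ hM) (abs_pos.2 (sub_ne_zero.2 hym))
    by_cases hay : a y = 0
    · simp only [spF, hay, zero_div, zero_mul, norm_zero]
      exact div_nonneg hA0 hQy.le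
    · have hlowy := h1 y hay hy
      rw [spF, norm_mul, norm_phE, mul_one, norm_div]
      have hden : ‖Complex.I * ((deriv Φ y : ℝ):ℂ)‖ = |deriv Φ y| := by
        simp [Real.norm_eq_abs]
      rw [hden]
      exact div_le_div₀ hA0 (hA y hy) hQy hlowy
  have hρcont : ContinuousOn
      (fun x => B/(x*(C₁*M*|x-m|)) + A*C₂*M/(C₁*M*|x-m|)^2) (Icc c d) := by
    have habs : ContinuousOn (fun x:ℝ => C₁*M*|x-m|) (Icc c d) :=
      (continuous_const.mul ((continuous_id.sub continuous_const).abs)).continuousOn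
    refine ContinuousOn.add ?_ ?_
    · exact continuousOn_const.div (continuousOn_id.mul habs)
        (fun x hx => mul_ne_zero (ne_of_gt (hsub hx)) (ne_of_gt (hQpos x hx)))
    · exact continuousOn_const.div (habs.pow 2)
        (fun x hx => pow_ne_zero 2 (ne_of_gt (hQpos x hx)))
  have hIntρ : IntervalIntegrable
      (fun x => B/(x*(C₁*M*|x-m|)) + A*C₂*M/(C₁*M*|x-m|)^2) volume c d := by
    apply ContinuousOn.intervalIntegrable; rwa [uIcc_of_le hcd]
  have hnormR : ‖∫ x in c..d, spR Φ a x‖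
      ≤ ∫ x in c..d, (B/(x*(C₁*M*|x-m|)) + A*C₂*M/(C₁*M*|x-m|)^2) := by
    have hae : ∀ᵐ t ∂(volume.restrict (Set.uIoc c d)),
        ‖spR Φ a t‖ ≤ B/(t*(C₁*M*|t-m|)) + A*C₂*M/(C₁*M*|t-m|)^2 := by
      refine (ae_restrict_iff' measurableSet_uIoc).2 (ae_of_all _ ?_)
      intro t ht
      rw [uIoc_of_le hcd] at ht
      exact (hkey t ⟨ht.1.le, ht.2⟩).2.1
    refine (intervalIntegral.norm_integral_le_abs_of_norm_le hae hIntρ).trans ?_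
    rw [abs_of_nonneg]
    refine intervalIntegral.integral_nonneg hcd ?_
    intro u hu
    have h1' : (0:ℝ) ≤ B/(u*(C₁*M*|u-m|)) :=
      div_nonneg hB0 (mul_nonneg (hsub hu).le (hQpos u hu).le)
    have h2' : (0:ℝ) ≤ A*C₂*M/(C₁*M*|u-m|)^2 :=
      div_nonneg (mul_nonneg (mul_nonneg hA0 hC₂.le) hM.le) (by positivity)
    linarith
  have hd0 : (0:ℝ) < d := lt_of_lt_of_le hc hcd
  have hcm : c ≠ m := fun h => hm (h ▸ ⟨le_refl c, hcd⟩)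
  have hdm : d ≠ m := fun h => hm (h ▸ ⟨hcd, le_refl d⟩)
  calc ‖∫ x in c..d, a x * phE Φ x‖
      = ‖spF Φ a d - spF Φ a c - ∫ x in c..d, spR Φ a x‖ := by rw [hsplit]
    _ ≤ ‖spF Φ a d - spF Φ a c‖ + ‖∫ x in c..d, spR Φ a x‖ := norm_sub_le _ _
    _ ≤ ‖spF Φ a d‖ + ‖spF Φ a c‖ + ‖∫ x in c..d, spR Φ a x‖ := by
        have := norm_sub_le (spF Φ a d) (spF Φ a c); linarith
    _ ≤ A/(C₁*M*|c-m|) + A/(C₁*M*|d-m|)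
        + ∫ x in c..d, (B/(x*(C₁*M*|x-m|)) + A*C₂*M/(C₁*M*|x-m|)^2) := by
        have h3 := hF d hd0 hdm
        have h4 := hF c hc hcm
        linarith

lemma tail_bound
    (C₁ C₂ M m A B : ℝ) (hC₁ : 0 < C₁) (hC₂ : 0 < C₂) (hM : 0 < M) (hm : 0 < m)
    (Φ : ℝ → ℝ) (a : ℝ → ℂ)
    (hΦ : ContDiffOn ℝ 2 Φ (Ioi 0)) (ha : ContDiffOn ℝ 1 a (Ioi 0))
    (h1 : ∀ l ∈ Function.support a, 0 < l → C₁*M*|l-m| ≤ |deriv Φ l|)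
    (h2 : ∀ l ∈ Function.support a, 0 < l → |deriv (deriv Φ) l| ≤ C₂*M)
    (hA : ∀ l ∈ Ioi (0:ℝ), ‖a l‖ ≤ A) (hB : ∀ l ∈ Ioi (0:ℝ), l*‖deriv a l‖ ≤ B)
    (hA0 : 0 ≤ A) (hB0 : 0 ≤ B)
    (δ : ℝ) (hδ : 0 < δ) (hMδ : M * (δ*δ) = 1)
    (hInt : IntegrableOn (fun x => a x * phE Φ x) (Ioi (m+δ)) volume) :
    ‖∫ x in Ioi (m+δ), a x * phE Φ x‖ ≤ (2*A/C₁ + B/C₁ + A*C₂/C₁^2) * δ := by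
  have hMne : M ≠ 0 := hM.ne'
  have hδne : δ ≠ 0 := hδ.ne'
  have hinvδ : δ⁻¹ = M * δ := by
    field_simp
    linarith [hMδ]
  have htend := MeasureTheory.intervalIntegral_tendsto_integral_Ioi (m+δ) hInt
    (Filter.tendsto_id (α := ℝ))
  refine le_of_tendsto htend.norm ?_
  filter_upwards [Filter.eventually_ge_atTop (m+δ)] with T hT
  simp only [id] at hT ⊢
  have hc0 : (0:ℝ) < m + δ := by linarith
  have hmIcc : m ∉ Icc (m+δ) T := fun h => by
    have := h.1; linarith
  have key := ibp_interval C₁ C₂ M m A B hC₁ hC₂ hM Φ a hΦ ha h1 h2 hA hB hA0 hB0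
    (m+δ) T hc0 hT hmIcc
  -- boundary terms
  have habs1 : |m + δ - m| = δ := by
    rw [abs_of_pos (by linarith : (0:ℝ) < m + δ - m)]; ring
  have hTm : δ ≤ T - m := by linarith
  have hQδ : 0 < C₁*M*δ := by positivity
  have hbd1 : A/(C₁*M*|m+δ-m|) = A/C₁ * δ := by
    rw [habs1, div_eq_iff (ne_of_gt hQδ),
      show A/C₁*δ*(C₁*M*δ) = A*(M*(δ*δ))*(C₁/C₁) from by ring, hMδ,
      div_self hC₁.ne', mul_one, mul_one]
  have habs2 : |T - m| = T - m := abs_of_pos (by linarith)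
  have hbd2 : A/(C₁*M*|T-m|) ≤ A/C₁ * δ := by
    rw [habs2, ← hbd1, habs1]
    gcongr <;> (first | exact hA0 | linarith)
  -- majorant for the integral term
  set K : ℝ := B/(C₁*M) + A*C₂/(C₁^2*M) with hK
  have hK0 : 0 ≤ K := by positivity
  have hmono : ∫ x in (m+δ)..T, (B/(x*(C₁*M*|x-m|)) + A*C₂*M/(C₁*M*|x-m|)^2)
      ≤ ∫ x in (m+δ)..T, K * ((x-m)^2)⁻¹ := by
    refine intervalIntegral.integral_mono_on hT ?_ ?_ ?_
    · -- integrability of the ρ₀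
      have hQpos : ∀ x ∈ Icc (m+δ) T, 0 < C₁*M*|x-m| := fun x hx =>
        mul_pos (mul_pos hC₁ hM) (abs_pos.2 (sub_ne_zero.2 (fun h => hmIcc (h ▸ hx))))
      have habsc : ContinuousOn (fun x:ℝ => C₁*M*|x-m|) (Icc (m+δ) T) :=
        (continuous_const.mul ((continuous_id.sub continuous_const).abs)).continuousOn
      apply ContinuousOn.intervalIntegrable
      rw [uIcc_of_le hT]
      refine ContinuousOn.add ?_ ?_
      · exact continuousOn_const.div (continuousOn_id.mul habsc)
          (fun x hx => mul_ne_zero (by nlinarith [hx.1] : x ≠ 0)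
            (ne_of_gt (hQpos x hx)))
      · exact continuousOn_const.div (habsc.pow 2)
          (fun x hx => pow_ne_zero 2 (ne_of_gt (hQpos x hx)))
    · apply ContinuousOn.intervalIntegrable
      rw [uIcc_of_le hT]
      refine continuousOn_const.mul (ContinuousOn.inv₀
        (((continuous_id.sub continuous_const).pow 2).continuousOn) ?_)
      intro x hx
      exact pow_ne_zero 2 (sub_ne_zero.2 (fun h => hmIcc (h ▸ hx)))
    · intro x hx
      have hx1 : m + δ ≤ x := hx.1
      have hxm : 0 < x - m := by linarith
      have hx0 : 0 < x := by linarith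
      have habsx : |x - m| = x - m := abs_of_pos hxm
      rw [habsx, hK]
      have e1 : B/(x*(C₁*M*(x-m))) ≤ B/(C₁*M) * ((x-m)^2)⁻¹ := by
        have : B/(C₁*M) * ((x-m)^2)⁻¹ = B/((x-m)*(C₁*M*(x-m))) := by
          rw [show ((x-m)*(C₁*M*(x-m))) = (C₁*M)*(x-m)^2 from by ring, ← div_div,
            div_eq_mul_inv, ← div_eq_mul_inv, ← div_eq_mul_inv, div_div, div_div, mul_assoc]
        rw [this]
        refine div_le_div_of_nonneg_left hB0 (by positivity) ?_
        have hD : (0:ℝ) < C₁*M*(x-m) := by positivity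
        nlinarith
      have e2 : A*C₂*M/(C₁*M*(x-m))^2 = A*C₂/(C₁^2*M) * ((x-m)^2)⁻¹ := by
        field_simp
      rw [add_mul]
      linarith [e1, e2.le]
  have hval : ∫ x in (m+δ)..T, K * ((x-m)^2)⁻¹ = K * ((m+δ-m)⁻¹ - (T-m)⁻¹) := by
    rw [intervalIntegral.integral_const_mul, integral_inv_sq_sub m (m+δ) T hT hmIcc]
  have hfin : K * ((m+δ-m)⁻¹ - (T-m)⁻¹) ≤ (B/C₁ + A*C₂/C₁^2) * δ := by
    have h5 : (0:ℝ) < T - m := by linarith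
    have h6 : (m+δ-m) = δ := by ring
    rw [h6]
    have h7 : K * (δ⁻¹ - (T-m)⁻¹) ≤ K * δ⁻¹ := by
      have h8 : (0:ℝ) < (T-m)⁻¹ := by positivity
      nlinarith [mul_nonneg hK0 h8.le]
    refine h7.trans ?_
    rw [hinvδ, hK]
    rw [show (B/(C₁*M) + A*C₂/(C₁^2*M)) * (M*δ) = (B/C₁ + A*C₂/C₁^2) * δ * (M/M) by ring]
    rw [div_self hMne, mul_one]
  calc ‖∫ x in (m+δ)..T, a x * phE Φ x‖
      ≤ A/(C₁*M*|m+δ-m|) + A/(C₁*M*|T-m|)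
        + ∫ x in (m+δ)..T, (B/(x*(C₁*M*|x-m|)) + A*C₂*M/(C₁*M*|x-m|)^2) := key
    _ ≤ A/C₁*δ + A/C₁*δ + (B/C₁ + A*C₂/C₁^2) * δ := by
        rw [hbd1]
        have := hmono.trans (le_of_eq hval) |>.trans hfin
        linarith [hbd2, this]
    _ = (2*A/C₁ + B/C₁ + A*C₂/C₁^2) * δ := by ring

lemma div_Mdelta (C₁ M δ A : ℝ) (hC₁ : C₁ ≠ 0) (hMδ : M*(δ*δ) = 1) (hQ : C₁*M*δ ≠ 0) :
    A/(C₁*M*δ) = A/C₁*δ := by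
  rw [div_eq_iff hQ, show A/C₁*δ*(C₁*M*δ) = A*(M*(δ*δ))*(C₁/C₁) from by ring, hMδ,
    div_self hC₁, mul_one, mul_one]

lemma left_bound
    (C₁ C₂ M m A B : ℝ) (hC₁ : 0 < C₁) (hC₂ : 0 < C₂) (hM : 0 < M) (hm : 0 < m)
    (Φ : ℝ → ℝ) (a : ℝ → ℂ)
    (hΦ : ContDiffOn ℝ 2 Φ (Ioi 0)) (ha : ContDiffOn ℝ 1 a (Ioi 0))
    (h1 : ∀ l ∈ Function.support a, 0 < l → C₁*M*|l-m| ≤ |deriv Φ l|)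
    (h2 : ∀ l ∈ Function.support a, 0 < l → |deriv (deriv Φ) l| ≤ C₂*M)
    (hA : ∀ l ∈ Ioi (0:ℝ), ‖a l‖ ≤ A) (hB : ∀ l ∈ Ioi (0:ℝ), l*‖deriv a l‖ ≤ B)
    (hA0 : 0 ≤ A) (hB0 : 0 ≤ B)
    (δ : ℝ) (hδ : 0 < δ) (hMδ : M * (δ*δ) = 1) (h2δ : 2*δ ≤ m) :
    ‖∫ x in δ..(m-δ), a x * phE Φ x‖ ≤ (2*A/C₁ + 2*B/C₁ + A*C₂/C₁^2) * δ := by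
  have hMne : M ≠ 0 := hM.ne'
  have hδne : δ ≠ 0 := hδ.ne'
  have hcd : δ ≤ m - δ := by linarith
  have hmIcc : m ∉ Icc δ (m-δ) := fun h => by have := h.2; linarith
  have hQδ : 0 < C₁*M*δ := by positivity
  have key := ibp_interval C₁ C₂ M m A B hC₁ hC₂ hM Φ a hΦ ha h1 h2 hA hB hA0 hB0
    δ (m-δ) hδ hcd hmIcc
  have hbd0 : A/(C₁*M*δ) = A/C₁*δ := div_Mdelta C₁ M δ A hC₁.ne' hMδ hQδ.ne'
  have habs1 : |δ - m| = m - δ := by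
    rw [abs_of_neg (by linarith : δ - m < 0)]; ring
  have hbd1 : A/(C₁*M*|δ-m|) ≤ A/C₁*δ := by
    rw [habs1, ← hbd0]
    gcongr <;> (first | exact hA0 | linarith)
  have habs2 : |m - δ - m| = δ := by
    rw [abs_of_neg (by linarith : m - δ - m < 0)]; ring
  have hbd2 : A/(C₁*M*|m-δ-m|) = A/C₁*δ := by rw [habs2, hbd0]
  set K1 : ℝ := B/(C₁*M) with hK1
  set K2 : ℝ := B/(C₁*M) + A*C₂/(C₁^2*M) with hK2
  have hK10 : 0 ≤ K1 := by positivity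
  have hK20 : 0 ≤ K2 := by positivity
  have hInt1 : IntervalIntegrable (fun x : ℝ => K1 * ((x^2)⁻¹)) volume δ (m-δ) := by
    apply ContinuousOn.intervalIntegrable
    rw [uIcc_of_le hcd]
    refine continuousOn_const.mul (ContinuousOn.inv₀ ((continuous_pow 2).continuousOn) ?_)
    intro x hx
    exact pow_ne_zero 2 (by have := hx.1; intro h; rw [h] at this; linarith : x ≠ 0)
  have hInt2 : IntervalIntegrable (fun x : ℝ => K2 * (((x-m)^2)⁻¹)) volume δ (m-δ) := by
    apply ContinuousOn.intervalIntegrable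
    rw [uIcc_of_le hcd]
    refine continuousOn_const.mul (ContinuousOn.inv₀
      (((continuous_id.sub continuous_const).pow 2).continuousOn) ?_)
    intro x hx
    exact pow_ne_zero 2 (sub_ne_zero.2 (fun h => hmIcc (h ▸ hx)))
  have hmono : ∫ x in δ..(m-δ), (B/(x*(C₁*M*|x-m|)) + A*C₂*M/(C₁*M*|x-m|)^2)
      ≤ ∫ x in δ..(m-δ), (K1 * ((x^2)⁻¹) + K2 * (((x-m)^2)⁻¹)) := by
    have hQpos : ∀ x ∈ Icc δ (m-δ), 0 < C₁*M*|x-m| := fun x hx =>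
      mul_pos (mul_pos hC₁ hM) (abs_pos.2 (sub_ne_zero.2 (fun h => hmIcc (h ▸ hx))))
    refine intervalIntegral.integral_mono_on hcd ?_ (hInt1.add hInt2) ?_
    · have habsc : ContinuousOn (fun x:ℝ => C₁*M*|x-m|) (Icc δ (m-δ)) :=
        (continuous_const.mul ((continuous_id.sub continuous_const).abs)).continuousOn
      apply ContinuousOn.intervalIntegrable
      rw [uIcc_of_le hcd]
      refine ContinuousOn.add ?_ ?_
      · refine continuousOn_const.div (continuousOn_id.mul habsc) ?_
        intro x hx
        refine mul_ne_zero ?_ (ne_of_gt (hQpos x hx))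
        have := hx.1; intro h; rw [h] at this; linarith
      · exact continuousOn_const.div (habsc.pow 2)
          (fun x hx => pow_ne_zero 2 (ne_of_gt (hQpos x hx)))
    · intro x hx
      have hx0 : 0 < x := lt_of_lt_of_le hδ hx.1
      have hxm : 0 < m - x := by have := hx.2; linarith
      have habsx : |x - m| = m - x := by
        rw [abs_of_neg (by linarith : x - m < 0)]; ring
      rw [habsx]
      have hsq : (x-m)^2 = (m-x)^2 := by ring
      have e1 : B/(x*(C₁*M*(m-x))) ≤ K1 * ((x^2)⁻¹ + ((x-m)^2)⁻¹) := by
        have heq : B/(x*(C₁*M*(m-x))) = K1 * ((x*(m-x))⁻¹) := by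
          rw [hK1, show x*(C₁*M*(m-x)) = (C₁*M)*(x*(m-x)) from by ring, ← div_div,
            div_eq_mul_inv]
        rw [heq]
        refine mul_le_mul_of_nonneg_left ?_ hK10
        rw [hsq]
        have hxne : (x:ℝ)^2 ≠ 0 := by positivity
        have hmxne : (m-x)^2 ≠ 0 := by positivity
        rw [inv_eq_one_div, inv_eq_one_div, inv_eq_one_div,
          div_add_div _ _ hxne hmxne, div_le_div_iff₀ (by positivity) (by positivity)]
        nlinarith [mul_nonneg (mul_pos hx0 hxm).le (sq_nonneg (x-(m-x))),
          sq_nonneg (x*(m-x))]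
      have e2 : A*C₂*M/(C₁*M*(m-x))^2 = A*C₂/(C₁^2*M) * ((x-m)^2)⁻¹ := by
        rw [hsq]
        field_simp
      rw [hK2, add_mul]
      have e1' := e1
      rw [hK1, mul_add] at e1'
      linarith [e2.le]
  have hIa := integral_inv_sq_sub 0 δ (m-δ) hcd
    (fun h => by have := h.1; linarith)
  simp only [sub_zero] at hIa
  have hIb := integral_inv_sq_sub m δ (m-δ) hcd hmIcc
  have hval : ∫ x in δ..(m-δ), (K1 * ((x^2)⁻¹) + K2 * (((x-m)^2)⁻¹))
      = K1*(δ⁻¹ - (m-δ)⁻¹) + K2*((δ-m)⁻¹ - (m-δ-m)⁻¹) := by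
    rw [intervalIntegral.integral_add hInt1 hInt2,
      intervalIntegral.integral_const_mul, intervalIntegral.integral_const_mul, hIa, hIb]
  have hfin : K1*(δ⁻¹ - (m-δ)⁻¹) + K2*((δ-m)⁻¹ - (m-δ-m)⁻¹)
      ≤ (2*B/C₁ + A*C₂/C₁^2) * δ := by
    have hinv1 : (0:ℝ) ≤ (m-δ)⁻¹ := inv_nonneg.2 (by linarith)
    have hinv2 : (δ-m)⁻¹ ≤ 0 := inv_nonpos.2 (by linarith)
    have hmd : m - δ - m = -δ := by ring
    have hstep : K1*(δ⁻¹ - (m-δ)⁻¹) + K2*((δ-m)⁻¹ - (m-δ-m)⁻¹)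
        ≤ (K1 + K2) * δ⁻¹ := by
      rw [hmd, inv_neg]
      nlinarith [mul_nonneg hK10 hinv1, mul_nonneg hK20 (neg_nonneg.2 hinv2)]
    refine hstep.trans ?_
    have hinvδ : δ⁻¹ = M * δ := by field_simp; linarith [hMδ]
    rw [hinvδ, hK1, hK2,
      show (B/(C₁*M) + (B/(C₁*M) + A*C₂/(C₁^2*M)))*(M*δ)
        = (2*B/C₁ + A*C₂/C₁^2)*δ*(M/M) from by ring, div_self hMne, mul_one]
  calc ‖∫ x in δ..(m-δ), a x * phE Φ x‖
      ≤ A/(C₁*M*|δ-m|) + A/(C₁*M*|m-δ-m|)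
        + ∫ x in δ..(m-δ), (B/(x*(C₁*M*|x-m|)) + A*C₂*M/(C₁*M*|x-m|)^2) := key
    _ ≤ A/C₁*δ + A/C₁*δ + (2*B/C₁ + A*C₂/C₁^2) * δ := by
        have := hmono.trans (hval.le.trans hfin)
        linarith [hbd1, hbd2.le, this]
    _ = (2*A/C₁ + 2*B/C₁ + A*C₂/C₁^2) * δ := by ring

lemma trivial_Ioc (A : ℝ) (Φ : ℝ → ℝ) (a : ℝ → ℂ)
    (hA : ∀ l ∈ Ioi (0:ℝ), ‖a l‖ ≤ A) (u v : ℝ) (hu : 0 ≤ u) (huv : u ≤ v)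
    (hmeas : AEStronglyMeasurable (fun x => a x * phE Φ x) (volume.restrict (Ioc u v))) :
    ‖∫ x in Ioc u v, a x * phE Φ x‖ ≤ A * (v - u) := by
  have h := norm_setIntegral_le_of_norm_le_const (μ := volume) (s := Ioc u v) (C := A) (f := fun x => a x * phE Φ x)
    (by rw [Real.volume_Ioc]; exact ENNReal.ofReal_lt_top)
    (fun x hx => by
      rw [norm_mul, norm_phE, mul_one]
      exact hA x (lt_of_le_of_lt hu hx.1))
  rwa [Real.volume_real_Ioc, max_eq_left (by linarith)] at h

/-- Quantitative stationary phase, case (ii): if `|Φ'(λ)| ≥ C₁ M |λ - m|` and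
`|Φ''| ≤ C₂ M` on the support of `a`, then
`|∫₀^∞ a e^{iΦ}| ≤ C M^{-1/2} (‖a‖_∞ + ‖λ ∂_λ a‖_∞)` with `C` depending only on `C₁, C₂`. -/
theorem quantitative_stationary_phase_two (C₁ C₂ : ℝ) (hC₁ : 0 < C₁) (hC₂ : 0 < C₂) :
    ∃ C > (0:ℝ), ∀ (Φ : ℝ → ℝ) (a : ℝ → ℂ),
      ContDiffOn ℝ 2 Φ (Ioi 0) → ContDiffOn ℝ 1 a (Ioi 0) →
      ∀ M m : ℝ, 0 < M → 0 < m →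
      (∀ l ∈ Function.support a, 0 < l → C₁ * M * |l - m| ≤ |deriv Φ l|) →
      (∀ l ∈ Function.support a, 0 < l → |deriv (deriv Φ) l| ≤ C₂ * M) →
      ∀ A B : ℝ, (∀ l ∈ Ioi (0:ℝ), ‖a l‖ ≤ A) →
        (∀ l ∈ Ioi (0:ℝ), l * ‖deriv a l‖ ≤ B) →
      ‖∫ l in Ioi (0:ℝ), a l * Complex.exp (Complex.I * (Φ l : ℂ))‖
        ≤ C * M ^ (-(1:ℝ)/2) * (A + B) := by
  refine ⟨4 + 4/C₁ + 2*C₂/C₁^2, by positivity, ?_⟩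
  intro Φ a hΦ ha M m hM hm h1 h2 A B hA hB
  have hA0 : 0 ≤ A := le_trans (norm_nonneg (a 1)) (hA 1 (by norm_num))
  have hB0 : 0 ≤ B := le_trans (by positivity) (hB 1 (by norm_num))
  have hAB0 : (0:ℝ) ≤ A + B := by linarith
  set δ : ℝ := M ^ (-(1:ℝ)/2) with hδdef
  have hδ : 0 < δ := Real.rpow_pos_of_pos hM _
  have hMδ : M * (δ*δ) = 1 := by
    have hδδ : δ*δ = M ^ (-(1:ℝ)) := by
      rw [hδdef, ← Real.rpow_add hM]; norm_num
    rw [hδδ, Real.rpow_neg_one]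
    exact mul_inv_cancel₀ hM.ne'
  show ‖∫ l in Ioi (0:ℝ), a l * phE Φ l‖ ≤ (4 + 4/C₁ + 2*C₂/C₁^2) * δ * (A + B)
  by_cases hInt : IntegrableOn (fun l => a l * phE Φ l) (Ioi (0:ℝ)) volume
  swap
  · rw [MeasureTheory.integral_undef hInt, norm_zero]
    have hCpos : (0:ℝ) < 4 + 4/C₁ + 2*C₂/C₁^2 := by positivity
    exact mul_nonneg (mul_nonneg hCpos.le hδ.le) hAB0
  have hmδ0 : (0:ℝ) < m + δ := by linarith
  have hIntTail : IntegrableOn (fun l => a l * phE Φ l) (Ioi (m+δ)) volume :=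
    hInt.mono_set (Ioi_subset_Ioi hmδ0.le)
  have hsplit1 : ∫ l in Ioi (0:ℝ), a l * phE Φ l
      = (∫ l in Ioc 0 (m+δ), a l * phE Φ l) + ∫ l in Ioi (m+δ), a l * phE Φ l := by
    rw [← setIntegral_union (Ioc_disjoint_Ioi le_rfl) measurableSet_Ioi
      (hInt.mono_set Ioc_subset_Ioi_self) hIntTail,
      Ioc_union_Ioi_eq_Ioi hmδ0.le]
  have T4 : ‖∫ x in Ioi (m+δ), a x * phE Φ x‖ ≤ (2*A/C₁ + B/C₁ + A*C₂/C₁^2) * δ :=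
    tail_bound C₁ C₂ M m A B hC₁ hC₂ hM hm Φ a hΦ ha h1 h2 hA hB hA0 hB0 δ hδ hMδ hIntTail
  by_cases hc2δ : 2*δ ≤ m
  · -- four regions
    have hδmδ : δ ≤ m - δ := by linarith
    have hmδmδ : m - δ ≤ m + δ := by linarith
    have hsub1 : Ioc (0:ℝ) δ ⊆ Ioi (0:ℝ) := Ioc_subset_Ioi_self
    have hsub2 : Ioc δ (m-δ) ⊆ Ioi (0:ℝ) := fun x hx => lt_trans hδ hx.1
    have hsub3 : Ioc (m-δ) (m+δ) ⊆ Ioi (0:ℝ) := fun x hx =>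
      lt_trans (lt_of_lt_of_le hδ hδmδ) hx.1
    have hsub4 : Ioc δ (m+δ) ⊆ Ioi (0:ℝ) := fun x hx => lt_trans hδ hx.1
    have hsplit2 : ∫ l in Ioc (0:ℝ) (m+δ), a l * phE Φ l
        = (∫ l in Ioc (0:ℝ) δ, a l * phE Φ l) + ((∫ l in Ioc δ (m-δ), a l * phE Φ l)
          + ∫ l in Ioc (m-δ) (m+δ), a l * phE Φ l) := by
      have e1 : Ioc (0:ℝ) (m+δ) = Ioc 0 δ ∪ Ioc δ (m+δ) :=
        (Ioc_union_Ioc_eq_Ioc hδ.le (hδmδ.trans hmδmδ)).symm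
      have e2 : Ioc δ (m+δ) = Ioc δ (m-δ) ∪ Ioc (m-δ) (m+δ) :=
        (Ioc_union_Ioc_eq_Ioc hδmδ hmδmδ).symm
      rw [e1, setIntegral_union (Set.Ioc_disjoint_Ioc_of_le le_rfl) measurableSet_Ioc
        (hInt.mono_set hsub1) (hInt.mono_set hsub4), e2,
        setIntegral_union (Set.Ioc_disjoint_Ioc_of_le le_rfl) measurableSet_Ioc
        (hInt.mono_set hsub2) (hInt.mono_set hsub3)]
    have T1 : ‖∫ x in Ioc (0:ℝ) δ, a x * phE Φ x‖ ≤ A * δ := by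
      have := trivial_Ioc A Φ a hA 0 δ le_rfl hδ.le
        ((hInt.mono_set Ioc_subset_Ioi_self).aestronglyMeasurable)
      simpa using this
    have T3 : ‖∫ x in Ioc (m-δ) (m+δ), a x * phE Φ x‖ ≤ A * (2*δ) := by
      have := trivial_Ioc A Φ a hA (m-δ) (m+δ) (by linarith) hmδmδ
        ((hInt.mono_set hsub3).aestronglyMeasurable)
      calc ‖∫ x in Ioc (m-δ) (m+δ), a x * phE Φ x‖ ≤ A * ((m+δ) - (m-δ)) := this
        _ = A * (2*δ) := by ring
    have T2 : ‖∫ x in Ioc δ (m-δ), a x * phE Φ x‖ ≤ (2*A/C₁ + 2*B/C₁ + A*C₂/C₁^2) * δ := by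
      rw [← intervalIntegral.integral_of_le hδmδ]
      exact left_bound C₁ C₂ M m A B hC₁ hC₂ hM hm Φ a hΦ ha h1 h2 hA hB hA0 hB0 δ hδ hMδ hc2δ
    rw [hsplit1, hsplit2]
    have hk1 : (0:ℝ) ≤ B*δ*(1/C₁) := by positivity
    have hk2 : (0:ℝ) ≤ B*δ*(C₂/C₁^2) := by positivity
    have hk3 : (0:ℝ) ≤ B*δ := by positivity
    have hk4 : (0:ℝ) ≤ A*δ := by positivity
    calc ‖(∫ l in Ioc (0:ℝ) δ, a l * phE Φ l) + ((∫ l in Ioc δ (m-δ), a l * phE Φ l)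
          + ∫ l in Ioc (m-δ) (m+δ), a l * phE Φ l) + ∫ l in Ioi (m+δ), a l * phE Φ l‖
        ≤ A*δ + ((2*A/C₁ + 2*B/C₁ + A*C₂/C₁^2) * δ + A*(2*δ))
          + (2*A/C₁ + B/C₁ + A*C₂/C₁^2) * δ := by
          refine (norm_add_le _ _).trans ?_
          refine add_le_add ((norm_add_le _ _).trans (add_le_add T1
            ((norm_add_le _ _).trans (add_le_add T2 T3)))) T4
      _ ≤ (4 + 4/C₁ + 2*C₂/C₁^2) * δ * (A + B) := by
          ring_nf
          ring_nf at hk1 hk2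
          linarith [hk1, hk2, hk3, hk4]
  · -- two regions
    push_neg at hc2δ
    have T1' : ‖∫ x in Ioc (0:ℝ) (m+δ), a x * phE Φ x‖ ≤ A * (3*δ) := by
      have := trivial_Ioc A Φ a hA 0 (m+δ) le_rfl hmδ0.le
        ((hInt.mono_set Ioc_subset_Ioi_self).aestronglyMeasurable)
      simp only [sub_zero] at this
      refine this.trans ?_
      have : m + δ ≤ 3*δ := by linarith
      nlinarith
    rw [hsplit1]
    have hk1 : (0:ℝ) ≤ B*δ*(1/C₁) := by positivity
    have hk2 : (0:ℝ) ≤ B*δ*(C₂/C₁^2) := by positivity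
    have hk3 : (0:ℝ) ≤ B*δ := by positivity
    have hk4 : (0:ℝ) ≤ A*δ := by positivity
    have hk5 : (0:ℝ) ≤ A*δ*(1/C₁) := by positivity
    have hk6 : (0:ℝ) ≤ A*δ*(C₂/C₁^2) := by positivity
    calc ‖(∫ l in Ioc (0:ℝ) (m+δ), a l * phE Φ l) + ∫ l in Ioi (m+δ), a l * phE Φ l‖
        ≤ A*(3*δ) + (2*A/C₁ + B/C₁ + A*C₂/C₁^2) * δ :=
          (norm_add_le _ _).trans (add_le_add T1' T4)
      _ ≤ (4 + 4/C₁ + 2*C₂/C₁^2) * δ * (A + B) := by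
          ring_nf
          ring_nf at hk1 hk2 hk5 hk6
          linarith [hk1, hk2, hk3, hk4, hk5, hk6]
end

section
/- Let Φ be a real-valued C² function and a a C¹ function on (0,∞). Suppose M, C₁, C₂ > 0 and m ∈ ℝ satisfy |Φ'(λ)| ≥ C₁ M λ|λ²−m| and |Φ''(λ)| ≤ C₂ M(λ²+|m|) for all λ in the support of a. Then there exists C>0 depending only on C₁, C₂ such that |∫₀^∞ a(λ)e^{iΦ(λ)} dλ| ≤ C M^{-1/2}(‖λ^{-1}a‖_∞ + ‖∂_λ a‖_∞), provided the right-hand side is finite. -/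
open Set MeasureTheory Filter Topology

lemma sp_aux1 {l w : ℝ} (hl : 0 < l) (hw : 0 < w) :
    1 / (l * w) ≤ 1 / 2 * (1 / l ^ 3 + l / w ^ 2) := by
  have h : 2 * l ^ 2 * w ≤ w ^ 2 + l ^ 4 := by nlinarith [sq_nonneg (w - l ^ 2)]
  have hl' := hl.ne'
  have hw' := hw.ne'
  have e1 : 1 / (l * w) = 2 * l ^ 2 * w / (2 * l ^ 3 * w ^ 2) := by field_simp
  have e2 : 1 / 2 * (1 / l ^ 3 + l / w ^ 2) = (w ^ 2 + l ^ 4) / (2 * l ^ 3 * w ^ 2) := by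
    field_simp
  rw [e1, e2]
  gcongr

lemma sp_aux2 {l m w : ℝ} (hl : 0 < l) (hw0 : 0 < w) (hw : w ^ 2 = (l ^ 2 - m) ^ 2) :
    (l ^ 2 + |m|) / (l * w ^ 2) ≤ 2 / l ^ 3 + 3 * l / w ^ 2 := by
  have hl' := hl.ne'
  have hw' := hw0.ne'
  have key : (l ^ 2 + |m|) * l ^ 2 ≤ 2 * w ^ 2 + 3 * l ^ 4 := by
    rw [hw]
    rcases abs_cases m with ⟨h1, h2⟩ | ⟨h1, h2⟩
    · rw [h1]; nlinarith [sq_nonneg (8 * l ^ 2 - 5 * m), sq_nonneg m]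
    · rw [h1]; nlinarith [mul_nonneg (sq_nonneg l) (neg_nonneg.mpr h2.le), sq_nonneg m]
  have e1 : (l ^ 2 + |m|) / (l * w ^ 2) = (l ^ 2 + |m|) * l ^ 2 / (l ^ 3 * w ^ 2) := by
    field_simp
  have e2 : 2 / l ^ 3 + 3 * l / w ^ 2 = (2 * w ^ 2 + 3 * l ^ 4) / (l ^ 3 * w ^ 2) := by
    field_simp
  rw [e1, e2]
  gcongr

set_option maxHeartbeats 1000000 in
/-- Quantitative degenerate stationary phase with vanishing amplitude:
if `|Φ'(λ)| ≥ C₁ M λ|λ² - m|` and `|Φ''(λ)| ≤ C₂ M (λ² + |m|)` on the support of `a`,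
then `|∫₀^∞ a e^{iΦ}| ≤ C M^{-1/2} (‖λ⁻¹ a‖_∞ + ‖∂_λ a‖_∞)` with `C` depending only on
`C₁, C₂`. -/
theorem quantitative_degenerate_stationary_phase (C₁ C₂ : ℝ) (hC₁ : 0 < C₁) (hC₂ : 0 < C₂) :
    ∃ C > (0:ℝ), ∀ (Φ : ℝ → ℝ) (a : ℝ → ℂ),
      ContDiffOn ℝ 2 Φ (Ioi 0) → ContDiffOn ℝ 1 a (Ioi 0) →
      ∀ (M : ℝ) (m : ℝ), 0 < M →
      (∀ l ∈ Function.support a, 0 < l → C₁ * M * l * |l^2 - m| ≤ |deriv Φ l|) →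
      (∀ l ∈ Function.support a, 0 < l → |deriv (deriv Φ) l| ≤ C₂ * M * (l^2 + |m|)) →
      ∀ A B : ℝ, (∀ l ∈ Ioi (0:ℝ), ‖a l‖ / l ≤ A) →
        (∀ l ∈ Ioi (0:ℝ), ‖deriv a l‖ ≤ B) →
      ‖∫ l in Ioi (0:ℝ), a l * Complex.exp (Complex.I * (Φ l : ℂ))‖
        ≤ C * M ^ (-(1:ℝ)/2) * (A + B) := by
  classical
  refine ⟨2 + 6 / C₁ + 9 * C₂ / C₁ ^ 2, by positivity, ?_⟩
  intro Φ a hΦ ha M m hM hp1 hp2 A B hA hB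
  have hA0 : 0 ≤ A := le_trans (by positivity) (hA 1 (by norm_num))
  have hB0 : 0 ≤ B := le_trans (norm_nonneg _) (hB 1 (by norm_num))
  have hAl : ∀ l : ℝ, 0 < l → ‖a l‖ ≤ A * l := by
    intro l hl
    have h := hA l hl
    rwa [div_le_iff₀ hl] at h
  set f : ℝ → ℂ := fun l => a l * Complex.exp (Complex.I * (Φ l : ℂ)) with hfdef
  have hfn : ∀ l, ‖f l‖ = ‖a l‖ := by
    intro l
    simp only [hfdef]
    rw [norm_mul, mul_comm Complex.I, Complex.norm_exp_ofReal_mul_I, mul_one]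
  have hrpos : (0:ℝ) < M ^ (-(1:ℝ)/2) := Real.rpow_pos_of_pos hM _
  by_cases hInt : IntegrableOn f (Ioi 0) volume
  swap
  · rw [integral_undef hInt, norm_zero]
    have h1 : (0:ℝ) ≤ 2 + 6 / C₁ + 9 * C₂ / C₁ ^ 2 := by positivity
    exact mul_nonneg (mul_nonneg h1 hrpos.le) (add_nonneg hA0 hB0)
  -- main case
  set δ : ℝ := M ^ (-(1:ℝ)/2) with hδdef
  have hδ : 0 < δ := hrpos
  have hMδ : M * δ * δ = 1 := by
    rw [hδdef, mul_assoc, ← Real.rpow_add hM,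
      show (-(1:ℝ)/2 + -(1:ℝ)/2) = -1 by norm_num, Real.rpow_neg_one,
      mul_inv_cancel₀ hM.ne']
  have hMδinv : 1 / (M * δ) = δ := by
    have h : M * δ ≠ 0 := by positivity
    field_simp
    linarith [hMδ]
  set lam : ℝ := Real.sqrt δ with hlamdef
  have hlam0 : 0 < lam := Real.sqrt_pos.mpr hδ
  have hlam2 : lam ^ 2 = δ := Real.sq_sqrt hδ.le
  set c1 : ℝ := Real.sqrt (m - δ) with hc1def
  set c2 : ℝ := Real.sqrt (max (m + δ) δ) with hc2def
  set v : ℝ := Real.sqrt (m + δ) with hvdef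
  have hc10 : 0 ≤ c1 := Real.sqrt_nonneg _
  have hc20 : 0 ≤ c2 := Real.sqrt_nonneg _
  have hc1v : c1 ≤ v := Real.sqrt_le_sqrt (by linarith)
  have hc1c2 : c1 ≤ c2 := Real.sqrt_le_sqrt (le_trans (by linarith) (le_max_left _ _))
  have hlamc2 : lam ≤ c2 := Real.sqrt_le_sqrt (le_max_right _ _)
  have hmem1 : ∀ l ∈ Ioo lam c1, 0 < l ∧ δ < l ^ 2 ∧ l ^ 2 < m - δ := by
    intro l hl
    have hl0 : 0 < l := lt_trans hlam0 hl.1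
    refine ⟨hl0, ?_, (Real.lt_sqrt hl0.le).mp hl.2⟩
    calc δ = lam ^ 2 := hlam2.symm
      _ < l ^ 2 := by nlinarith [hl.1, hlam0]
  have hmem2 : ∀ l ∈ Ioi c2, 0 < l ∧ δ < l ^ 2 ∧ m + δ < l ^ 2 := by
    intro l hl
    have hl0 : 0 < l := lt_of_le_of_lt hc20 hl
    have h2 : max (m + δ) δ < l ^ 2 := (Real.sqrt_lt' hl0).mp hl
    exact ⟨hl0, lt_of_le_of_lt (le_max_right _ _) h2, lt_of_le_of_lt (le_max_left _ _) h2⟩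
  -- derivative infrastructure
  have hΦdiff : ∀ l ∈ Ioi (0:ℝ), HasDerivAt Φ (deriv Φ l) l := by
    intro l hl
    exact ((hΦ.differentiableOn (by norm_num)).differentiableAt (Ioi_mem_nhds hl)).hasDerivAt
  have hφ'cd : ContDiffOn ℝ 1 (deriv Φ) (Ioi 0) := hΦ.deriv_of_isOpen isOpen_Ioi (by norm_num)
  have hφ'diff : ∀ l ∈ Ioi (0:ℝ), HasDerivAt (deriv Φ) (deriv (deriv Φ) l) l := by
    intro l hl
    exact ((hφ'cd.differentiableOn (by norm_num)).differentiableAt (Ioi_mem_nhds hl)).hasDerivAt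
  have hφ'cont : ContinuousOn (deriv Φ) (Ioi 0) := hφ'cd.continuousOn
  have hadiff : ∀ l ∈ Ioi (0:ℝ), HasDerivAt a (deriv a l) l := by
    intro l hl
    exact ((ha.differentiableOn (by norm_num)).differentiableAt (Ioi_mem_nhds hl)).hasDerivAt
  have hacont : ContinuousOn a (Ioi 0) := ha.continuousOn
  have haCA : ∀ l : ℝ, 0 < l → ContinuousAt a l :=
    fun l hl => hacont.continuousAt (Ioi_mem_nhds hl)
  -- extension of the lower bound to the closure of the support
  have hlow : ∀ b : ℝ, 0 < b → b ∈ closure (Function.support a) →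
      C₁ * M * b * |b ^ 2 - m| ≤ |deriv Φ b| := by
    intro b hb0 hbc
    have hbc' : b ∈ closure (Function.support a ∩ Ioi 0) := by
      have h2 := isOpen_Ioi.inter_closure (⟨hb0, hbc⟩ : b ∈ Ioi (0:ℝ) ∩ closure (Function.support a))
      rwa [Set.inter_comm] at h2
    have hne : (𝓝[Function.support a ∩ Ioi 0] b).NeBot :=
      mem_closure_iff_nhdsWithin_neBot.mp hbc'
    have hcont1 : Continuous fun l : ℝ => C₁ * M * l * |l ^ 2 - m| := by
      apply Continuous.mul
      · exact continuous_const.mul continuous_id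
      · exact ((continuous_pow 2).sub continuous_const).abs
    have h1 : Tendsto (fun l => C₁ * M * l * |l ^ 2 - m|) (𝓝[Function.support a ∩ Ioi 0] b)
        (𝓝 (C₁ * M * b * |b ^ 2 - m|)) :=
      (hcont1.tendsto b).mono_left nhdsWithin_le_nhds
    have h2 : Tendsto (fun l => |deriv Φ l|) (𝓝[Function.support a ∩ Ioi 0] b)
        (𝓝 |deriv Φ b|) := by
      have h3 : Tendsto (deriv Φ) (𝓝[Function.support a ∩ Ioi 0] b) (𝓝 (deriv Φ b)) := by
        have := (hφ'cont.continuousAt (Ioi_mem_nhds hb0)).tendsto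
        exact this.mono_left nhdsWithin_le_nhds
      exact h3.abs
    refine le_of_tendsto_of_tendsto h1 h2 ?_
    filter_upwards [self_mem_nhdsWithin] with l hl using hp1 l hl.1 hl.2
  set q : ℝ → ℂ := fun l => if a l = 0 then 0 else a l / (Complex.I * (Complex.ofReal (deriv Φ l)))
    with hqdef
  set G : ℝ → ℝ := fun l =>
    B / (C₁ * M * l * |l ^ 2 - m|) + A * C₂ * (l ^ 2 + |m|) / (C₁ ^ 2 * M * l * (l ^ 2 - m) ^ 2)
    with hGdef
  have hG0 : ∀ l : ℝ, 0 < l → 0 ≤ G l := by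
    intro l hl
    apply add_nonneg (div_nonneg hB0 (by positivity))
    exact div_nonneg (mul_nonneg (mul_nonneg hA0 hC₂.le) (by positivity)) (by positivity)
  have hqnorm : ∀ l : ℝ, 0 < l → δ < |l ^ 2 - m| → ‖q l‖ ≤ A / (C₁ * M * δ) := by
    intro l hl hm'
    simp only [hqdef]
    by_cases hal : a l = 0
    · rw [if_pos hal, norm_zero]
      positivity
    · have hsup : l ∈ Function.support a := hal
      have hlow1 := hp1 l hsup hl
      have habs : 0 < |l ^ 2 - m| := lt_trans hδ hm'
      have hden : 0 < C₁ * M * l * |l ^ 2 - m| := by positivity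
      have hφpos : 0 < |deriv Φ l| := lt_of_lt_of_le hden hlow1
      rw [if_neg hal, norm_div, norm_mul, Complex.norm_I, one_mul, Complex.norm_real,
        Real.norm_eq_abs]
      calc ‖a l‖ / |deriv Φ l| ≤ A * l / (C₁ * M * l * |l ^ 2 - m|) :=
            div_le_div₀ (by positivity) (hAl l hl) hden hlow1
        _ = A / (C₁ * M * |l ^ 2 - m|) := by
            rw [div_eq_div_iff hden.ne' (by positivity : (0:ℝ) < C₁ * M * |l ^ 2 - m|).ne']
            ring
        _ ≤ A / (C₁ * M * δ) := by gcongr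
  have hqmul : ∀ l : ℝ, 0 < l → δ < |l ^ 2 - m| →
      q l * (Complex.I * (Complex.ofReal (deriv Φ l))) = a l := by
    intro l hl hm'
    simp only [hqdef]
    by_cases hal : a l = 0
    · simp [hal]
    · rw [if_neg hal]
      have hlow1 := hp1 l hal hl
      have habs : 0 < |l ^ 2 - m| := lt_trans hδ hm'
      have hden : 0 < C₁ * M * l * |l ^ 2 - m| := by positivity
      have hφpos : 0 < |deriv Φ l| := lt_of_lt_of_le hden hlow1
      have hφne : deriv Φ l ≠ 0 := abs_pos.mp hφpos
      exact div_mul_cancel₀ _ (mul_ne_zero Complex.I_ne_zero (Complex.ofReal_ne_zero.mpr hφne))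
  have hqd : ∀ b : ℝ, 0 < b → δ < |b ^ 2 - m| →
      HasDerivAt q (deriv q b) b ∧ ‖deriv q b‖ ≤ G b := by
    intro b hb0 hbm
    have hbIoi : b ∈ Ioi (0:ℝ) := hb0
    have habs : 0 < |b ^ 2 - m| := lt_trans hδ hbm
    have hbm' : b ^ 2 - m ≠ 0 := by
      intro h
      rw [h, abs_zero] at habs
      exact lt_irrefl 0 habs
    by_cases hab : a b = 0
    · by_cases hcl : b ∈ closure (Function.support a)
      · -- boundary of the support: a b = 0 and deriv Φ b ≠ 0
        have hlowb := hlow b hb0 hcl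
        have hden : 0 < C₁ * M * b * |b ^ 2 - m| := by positivity
        have hφpos : 0 < |deriv Φ b| := lt_of_lt_of_le hden hlowb
        have hφne : deriv Φ b ≠ 0 := abs_pos.mp hφpos
        have hcne : (Complex.I * (Complex.ofReal (deriv Φ b))) ≠ 0 :=
          mul_ne_zero Complex.I_ne_zero (Complex.ofReal_ne_zero.mpr hφne)
        set u : ℝ → ℂ := fun l => (Complex.I * (Complex.ofReal (deriv Φ l)))⁻¹ with hudef
        set r : ℝ → ℂ := fun l => if a l = 0 then u b else u l with hrdef
        have hqr : ∀ l, q l = a l * r l := by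
          intro l
          by_cases h : a l = 0
          · simp [hqdef, hrdef, h]
          · simp only [hqdef, hrdef, hudef, if_neg h, div_eq_mul_inv]
        have hucont : ContinuousAt u b := by
          simp only [hudef]
          exact (continuousAt_const.mul (Complex.continuous_ofReal.continuousAt.comp
            (hφ'cont.continuousAt (Ioi_mem_nhds hb0)))).inv₀ hcne
        have hrt : Tendsto r (𝓝 b) (𝓝 (u b)) := by
          have h0 : Tendsto (fun l => u l - u b) (𝓝 b) (𝓝 0) := by
            have h1 := hucont.tendsto.sub (tendsto_const_nhds (x := u b))
            simpa using h1
          have h0' : Tendsto (fun l => ‖u l - u b‖) (𝓝 b) (𝓝 0) := by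
            simpa using h0.norm
          have hz : Tendsto (fun l => r l - u b) (𝓝 b) (𝓝 0) := by
            apply squeeze_zero_norm ?_ h0'
            intro l
            by_cases h : a l = 0
            · simp [hrdef, h]
            · simp [hrdef, h]
          have := hz.add (tendsto_const_nhds (x := u b))
          simpa using this
        have hqb : q b = 0 := by simp [hqdef, hab]
        have hD : HasDerivAt q (deriv a b * u b) b := by
          rw [hasDerivAt_iff_tendsto_slope]
          have hsl : ∀ l, slope q b l = slope a b l * r l := by
            intro l
            simp only [slope, vsub_eq_sub, hqb, sub_zero, hqr l, hab, smul_mul_assoc]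
          have h1 : Tendsto (slope a b) (𝓝[≠] b) (𝓝 (deriv a b)) :=
            hasDerivAt_iff_tendsto_slope.mp (hadiff b hbIoi)
          have h2 := h1.mul (hrt.mono_left nhdsWithin_le_nhds)
          rwa [show (fun l => slope a b l * r l) = slope q b from
            (funext fun l => (hsl l).symm)] at h2
        have hder : deriv q b = deriv a b * u b := hD.deriv
        refine ⟨by rw [hder]; exact hD, ?_⟩
        rw [hder]
        have h3 : ‖deriv a b * u b‖ = ‖deriv a b‖ / |deriv Φ b| := by
          rw [norm_mul, hudef, norm_inv, norm_mul, Complex.norm_I, one_mul,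
            Complex.norm_real, Real.norm_eq_abs, div_eq_mul_inv]
        rw [h3]
        have h4 : ‖deriv a b‖ / |deriv Φ b| ≤ B / (C₁ * M * b * |b ^ 2 - m|) :=
          div_le_div₀ hB0 (hB b hbIoi) hden hlowb
        refine le_trans h4 ?_
        simp only [hGdef]
        apply le_add_of_nonneg_right
        exact div_nonneg (mul_nonneg (mul_nonneg hA0 hC₂.le) (by positivity)) (by positivity)
      · -- away from the support: q vanishes near b
        have hop : IsOpen ((closure (Function.support a))ᶜ) := isClosed_closure.isOpen_compl
        have hmem : (closure (Function.support a))ᶜ ∈ 𝓝 b := hop.mem_nhds hcl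
        have hev : q =ᶠ[𝓝 b] fun _ => (0:ℂ) := by
          filter_upwards [hmem] with l hl
          have hzl : a l = 0 := by
            by_contra h
            exact hl (subset_closure h)
          simp [hqdef, hzl]
        have hD : HasDerivAt q 0 b :=
          (hasDerivAt_const b (0:ℂ)).congr_of_eventuallyEq hev
        have hder : deriv q b = 0 := hD.deriv
        refine ⟨by rw [hder]; exact hD, ?_⟩
        rw [hder, norm_zero]
        exact hG0 b hb0
    · -- a b ≠ 0 : q = a / (I Φ') near b
      have hsup : b ∈ Function.support a := hab
      have hlow1 := hp1 b hsup hb0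
      have hup1 := hp2 b hsup hb0
      have hden : 0 < C₁ * M * b * |b ^ 2 - m| := by positivity
      have hφpos : 0 < |deriv Φ b| := lt_of_lt_of_le hden hlow1
      have hφne : deriv Φ b ≠ 0 := abs_pos.mp hφpos
      have hcne : (Complex.I * (Complex.ofReal (deriv Φ b))) ≠ 0 :=
        mul_ne_zero Complex.I_ne_zero (Complex.ofReal_ne_zero.mpr hφne)
      have hd_den : HasDerivAt (fun l => Complex.I * (Complex.ofReal (deriv Φ l)))
          (Complex.I * (Complex.ofReal (deriv (deriv Φ) b))) b :=
        ((hφ'diff b hbIoi).ofReal_comp).const_mul Complex.I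
      have hdiv := (hadiff b hbIoi).div hd_den hcne
      have heq : q =ᶠ[𝓝 b] fun l => a l / (Complex.I * (Complex.ofReal (deriv Φ l))) := by
        filter_upwards [(haCA b hb0).eventually_ne hab] with l hl
        simp [hqdef, hl]
      have hD := hdiv.congr_of_eventuallyEq heq
      have hder := hD.deriv
      refine ⟨by rw [hder]; exact hD, ?_⟩
      rw [hder]
      have hnormden : ‖(Complex.I * (Complex.ofReal (deriv Φ b))) ^ 2‖ = |deriv Φ b| ^ 2 := by
        rw [norm_pow, norm_mul, Complex.norm_I, one_mul, Complex.norm_real, Real.norm_eq_abs]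
      rw [norm_div, hnormden]
      have hnum : ‖deriv a b * (Complex.I * (Complex.ofReal (deriv Φ b)))
          - a b * (Complex.I * (Complex.ofReal (deriv (deriv Φ) b)))‖
          ≤ B * |deriv Φ b| + A * b * (C₂ * M * (b ^ 2 + |m|)) := by
        refine le_trans (norm_sub_le _ _) ?_
        have e1 : ‖deriv a b * (Complex.I * (Complex.ofReal (deriv Φ b)))‖
            = ‖deriv a b‖ * |deriv Φ b| := by
          rw [norm_mul, norm_mul, Complex.norm_I, one_mul, Complex.norm_real, Real.norm_eq_abs]
        have e2 : ‖a b * (Complex.I * (Complex.ofReal (deriv (deriv Φ) b)))‖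
            = ‖a b‖ * |deriv (deriv Φ) b| := by
          rw [norm_mul, norm_mul, Complex.norm_I, one_mul, Complex.norm_real, Real.norm_eq_abs]
        rw [e1, e2]
        apply add_le_add
        · exact mul_le_mul_of_nonneg_right (hB b hbIoi) (abs_nonneg _)
        · exact mul_le_mul (hAl b hb0) hup1 (abs_nonneg _) (by positivity)
      calc ‖deriv a b * (Complex.I * (Complex.ofReal (deriv Φ b)))
            - a b * (Complex.I * (Complex.ofReal (deriv (deriv Φ) b)))‖ / |deriv Φ b| ^ 2
          ≤ (B * |deriv Φ b| + A * b * (C₂ * M * (b ^ 2 + |m|))) / |deriv Φ b| ^ 2 := by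
            gcongr
        _ = B / |deriv Φ b| + A * b * (C₂ * M * (b ^ 2 + |m|)) / |deriv Φ b| ^ 2 := by
            rw [add_div]
            congr 1
            rw [div_eq_div_iff (by positivity) hφpos.ne']
            ring
        _ ≤ B / (C₁ * M * b * |b ^ 2 - m|)
            + A * b * (C₂ * M * (b ^ 2 + |m|)) / (C₁ * M * b * |b ^ 2 - m|) ^ 2 := by
            gcongr
        _ = G b := by
            simp only [hGdef]
            congr 1
            rw [mul_pow, mul_pow, mul_pow, sq_abs]
            rw [div_eq_div_iff (by positivity) (by positivity)]
            ring
  set κ : ℝ := B / (2 * C₁) + 3 * A * C₂ / C₁ ^ 2 with hκdef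
  have hκ0 : 0 ≤ κ := by
    apply add_nonneg (div_nonneg hB0 (by positivity))
    exact div_nonneg (mul_nonneg (mul_nonneg (by norm_num) hA0) hC₂.le) (by positivity)
  have hGH : ∀ l : ℝ, 0 < l → δ < |l ^ 2 - m| →
      G l ≤ κ / M * (1 / l ^ 3 + l / (l ^ 2 - m) ^ 2) := by
    intro l hl hm'
    have habs : 0 < |l ^ 2 - m| := lt_trans hδ hm'
    have hmne : l ^ 2 - m ≠ 0 := by
      intro h; rw [h, abs_zero] at habs; exact lt_irrefl 0 habs
    have h1 := sp_aux1 hl habs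
    have h2 := sp_aux2 hl habs (sq_abs _)
    have e1 : B / (C₁ * M * l * |l ^ 2 - m|) = B / (C₁ * M) * (1 / (l * |l ^ 2 - m|)) := by
      rw [div_mul_div_comm, mul_one]
      congr 1
      ring
    have e2 : A * C₂ * (l ^ 2 + |m|) / (C₁ ^ 2 * M * l * (l ^ 2 - m) ^ 2)
        = A * C₂ / (C₁ ^ 2 * M) * ((l ^ 2 + |m|) / (l * |l ^ 2 - m| ^ 2)) := by
      rw [sq_abs, div_mul_div_comm]
      congr 1
      ring
    have hw2 : l / |l ^ 2 - m| ^ 2 = l / (l ^ 2 - m) ^ 2 := by rw [sq_abs]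
    have hc1 : (0:ℝ) ≤ B / (C₁ * M) := div_nonneg hB0 (by positivity)
    have hc2 : (0:ℝ) ≤ A * C₂ / (C₁ ^ 2 * M) :=
      div_nonneg (mul_nonneg hA0 hC₂.le) (by positivity)
    have hp : (0:ℝ) ≤ 1 / l ^ 3 := by positivity
    have hs : (0:ℝ) ≤ l / (l ^ 2 - m) ^ 2 := by positivity
    have step1 : G l ≤ B / (C₁ * M) * (1 / 2 * (1 / l ^ 3 + l / (l ^ 2 - m) ^ 2))
        + A * C₂ / (C₁ ^ 2 * M) * (2 / l ^ 3 + 3 * l / (l ^ 2 - m) ^ 2) := by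
      simp only [hGdef]
      rw [e1, e2]
      apply add_le_add
      · refine mul_le_mul_of_nonneg_left ?_ hc1
        rw [← hw2]
        exact h1
      · refine mul_le_mul_of_nonneg_left ?_ hc2
        calc (l ^ 2 + |m|) / (l * |l ^ 2 - m| ^ 2) ≤ 2 / l ^ 3 + 3 * l / |l ^ 2 - m| ^ 2 := h2
          _ = 2 / l ^ 3 + 3 * l / (l ^ 2 - m) ^ 2 := by rw [sq_abs]
    refine le_trans step1 ?_
    have e3 : κ / M * (1 / l ^ 3 + l / (l ^ 2 - m) ^ 2)
        - (B / (C₁ * M) * (1 / 2 * (1 / l ^ 3 + l / (l ^ 2 - m) ^ 2))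
          + A * C₂ / (C₁ ^ 2 * M) * (2 / l ^ 3 + 3 * l / (l ^ 2 - m) ^ 2))
        = A * C₂ / (C₁ ^ 2 * M) * (1 / l ^ 3) := by
      rw [hκdef]
      field_simp
      ring
    have h4 : (0:ℝ) ≤ A * C₂ / (C₁ ^ 2 * M) * (1 / l ^ 3) := mul_nonneg hc2 hp
    linarith [e3, h4]
  set ε₀ : ℝ := 2 * (A / (C₁ * M * δ)) + κ / M * (1 / δ) with hε₀def
  have hε₀0 : 0 ≤ ε₀ := by
    apply add_nonneg
    · exact mul_nonneg (by norm_num) (div_nonneg hA0 (by positivity))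
    · exact mul_nonneg (div_nonneg hκ0 hM.le) (by positivity)
  have key : ∀ x y : ℝ, x ≤ y → (∀ l ∈ Icc x y, 0 < l ∧ δ < l ^ 2 ∧ δ < |l ^ 2 - m|) →
      ((∀ l ∈ Icc x y, m + δ < l ^ 2) ∨ (∀ l ∈ Icc x y, l ^ 2 < m - δ)) →
      ‖∫ l in x..y, f l‖ ≤ ε₀ := by
    intro x y hxy hF hsign
    have hxIcc : x ∈ Icc x y := ⟨le_rfl, hxy⟩
    have hyIcc : y ∈ Icc x y := ⟨hxy, le_rfl⟩
    obtain ⟨hx0, hxδ, hxm⟩ := hF x hxIcc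
    obtain ⟨hy0, hyδ, hym⟩ := hF y hyIcc
    have hIccIoi : Icc x y ⊆ Ioi (0:ℝ) := fun l hl => (hF l hl).1
    have hne2 : ∀ l ∈ Icc x y, l ^ 2 - m ≠ 0 := by
      intro l hl h
      have h2 := (hF l hl).2.2
      rw [h, abs_zero] at h2
      linarith
    have hexp1 : ∀ t : ℝ, ‖Complex.exp (Complex.I * (t : ℂ))‖ = 1 := by
      intro t
      rw [mul_comm, Complex.norm_exp_ofReal_mul_I]
    have hEd : ∀ l ∈ Icc x y, HasDerivAt (fun t => Complex.exp (Complex.I * (Φ t : ℂ)))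
        (Complex.I * (Complex.ofReal (deriv Φ l)) * Complex.exp (Complex.I * (Φ l : ℂ))) l := by
      intro l hl
      have h1 : HasDerivAt (fun t => Complex.I * (Φ t : ℂ))
          (Complex.I * (Complex.ofReal (deriv Φ l))) l :=
        ((hΦdiff l (hIccIoi hl)).ofReal_comp).const_mul Complex.I
      simpa [mul_comm] using h1.cexp
    have hq' : ∀ l ∈ Icc x y, HasDerivAt q (deriv q l) l ∧ ‖deriv q l‖ ≤ G l := fun l hl =>
      hqd l (hF l hl).1 (hF l hl).2.2
    have hprod : ∀ l ∈ Icc x y,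
        HasDerivAt (fun t => q t * Complex.exp (Complex.I * (Φ t : ℂ)))
          (deriv q l * Complex.exp (Complex.I * (Φ l : ℂ)) + f l) l := by
      intro l hl
      have h := ((hq' l hl).1).mul (hEd l hl)
      have e : q l * (Complex.I * (Complex.ofReal (deriv Φ l)) * Complex.exp (Complex.I * (Φ l : ℂ)))
          = f l := by
        rw [← mul_assoc, hqmul l (hF l hl).1 (hF l hl).2.2]
      rwa [e] at h
    have hΦcont := hΦ.continuousOn
    have hEcont : ContinuousOn (fun t => Complex.exp (Complex.I * (Φ t : ℂ))) (Icc x y) := by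
      apply Complex.continuous_exp.comp_continuousOn
      exact continuousOn_const.mul
        (Complex.continuous_ofReal.comp_continuousOn (hΦcont.mono hIccIoi))
    have hfcont : ContinuousOn f (Icc x y) := by
      simp only [hfdef]
      exact (hacont.mono hIccIoi).mul hEcont
    have hfint : IntervalIntegrable f volume x y := hfcont.intervalIntegrable_of_Icc hxy
    set H : ℝ → ℝ := fun l => κ / M * (1 / l ^ 3 + l / (l ^ 2 - m) ^ 2) with hHdef
    have hHcont : ContinuousOn H (Icc x y) := by
      simp only [hHdef]
      apply ContinuousOn.mul continuousOn_const
      apply ContinuousOn.add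
      · exact continuousOn_const.div ((continuous_pow 3).continuousOn)
          (fun l hl => pow_ne_zero 3 (ne_of_gt (hF l hl).1))
      · exact continuousOn_id.div
          ((((continuous_pow 2).continuousOn).sub continuousOn_const).pow 2)
          (fun l hl => pow_ne_zero 2 (hne2 l hl))
    have hHint : IntervalIntegrable H volume x y := hHcont.intervalIntegrable_of_Icc hxy
    have hGH' : ∀ l ∈ Icc x y, ‖deriv q l‖ ≤ H l := by
      intro l hl
      refine le_trans ((hq' l hl).2) ?_
      simp only [hHdef]
      exact hGH l (hF l hl).1 (hF l hl).2.2
    have hq'int : IntervalIntegrable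
        (fun l => deriv q l * Complex.exp (Complex.I * (Φ l : ℂ))) volume x y := by
      rw [intervalIntegrable_iff_integrableOn_Ioc_of_le hxy]
      have hmeas : AEStronglyMeasurable
          (fun l => deriv q l * Complex.exp (Complex.I * (Φ l : ℂ)))
          (volume.restrict (Ioc x y)) := by
        apply AEStronglyMeasurable.mul
        · exact (measurable_deriv q).aestronglyMeasurable
        · exact (hEcont.mono Ioc_subset_Icc_self).aestronglyMeasurable measurableSet_Ioc
      have hHIntOn : IntegrableOn H (Ioc x y) volume :=
        (intervalIntegrable_iff_integrableOn_Ioc_of_le hxy).mp hHint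
      apply Integrable.mono' hHIntOn hmeas
      filter_upwards [ae_restrict_mem measurableSet_Ioc] with l hl
      rw [norm_mul, hexp1, mul_one]
      exact hGH' l (Ioc_subset_Icc_self hl)
    have hFTC : ∫ l in x..y, (deriv q l * Complex.exp (Complex.I * (Φ l : ℂ)) + f l)
        = q y * Complex.exp (Complex.I * (Φ y : ℂ))
          - q x * Complex.exp (Complex.I * (Φ x : ℂ)) := by
      apply intervalIntegral.integral_eq_sub_of_hasDerivAt
      · intro l hl
        rw [uIcc_of_le hxy] at hl
        exact hprod l hl
      · exact hq'int.add hfint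
    have hsplit2 : ∫ l in x..y, (deriv q l * Complex.exp (Complex.I * (Φ l : ℂ)) + f l)
        = (∫ l in x..y, deriv q l * Complex.exp (Complex.I * (Φ l : ℂ)))
          + ∫ l in x..y, f l :=
      intervalIntegral.integral_add hq'int hfint
    have hfeq : ∫ l in x..y, f l = (q y * Complex.exp (Complex.I * (Φ y : ℂ))
        - q x * Complex.exp (Complex.I * (Φ x : ℂ)))
        - ∫ l in x..y, deriv q l * Complex.exp (Complex.I * (Φ l : ℂ)) := by
      rw [← hFTC, hsplit2]
      ring
    set P : ℝ → ℝ := fun l => κ / M * (-(1/2) * (l ^ 2)⁻¹ + -(1/2) * (l ^ 2 - m)⁻¹) with hPdef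
    have hPd : ∀ l ∈ Icc x y, HasDerivAt P (H l) l := by
      intro l hl
      have hl0 : (0:ℝ) < l := (hF l hl).1
      have hlne : l ^ 2 ≠ 0 := pow_ne_zero 2 hl0.ne'
      have hmne := hne2 l hl
      have d1 : HasDerivAt (fun t : ℝ => t ^ 2) (2 * l) l := by
        simpa using hasDerivAt_pow 2 l
      have d2 : HasDerivAt (fun t : ℝ => (t ^ 2)⁻¹) (-(2 * l) / (l ^ 2) ^ 2) l := d1.inv hlne
      have d3 : HasDerivAt (fun t : ℝ => t ^ 2 - m) (2 * l) l := d1.sub_const m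
      have d4 : HasDerivAt (fun t : ℝ => (t ^ 2 - m)⁻¹) (-(2 * l) / (l ^ 2 - m) ^ 2) l :=
        d3.inv hmne
      have d5 := ((d2.const_mul (-(1/2 : ℝ))).add (d4.const_mul (-(1/2 : ℝ)))).const_mul (κ / M)
      have e : κ / M * (-(1/2 : ℝ) * (-(2 * l) / (l ^ 2) ^ 2) + -(1/2 : ℝ) * (-(2 * l) / (l ^ 2 - m) ^ 2))
          = H l := by
        simp only [hHdef]
        congr 1
        field_simp
      rw [e] at d5
      exact d5
    have hHeq : ∫ l in x..y, H l = P y - P x := by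
      apply intervalIntegral.integral_eq_sub_of_hasDerivAt
      · intro l hl
        rw [uIcc_of_le hxy] at hl
        exact hPd l hl
      · exact hHint
    have hPbound : P y - P x ≤ κ / M * (1 / δ) := by
      simp only [hPdef]
      have hκM : 0 ≤ κ / M := div_nonneg hκ0 hM.le
      have h2 : (x ^ 2)⁻¹ ≤ δ⁻¹ := by
        apply inv_anti₀ hδ hxδ.le
      have h1 : (0:ℝ) ≤ (y ^ 2)⁻¹ := by positivity
      have e : κ / M * (-(1/2) * (y ^ 2)⁻¹ + -(1/2) * (y ^ 2 - m)⁻¹)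
          - κ / M * (-(1/2) * (x ^ 2)⁻¹ + -(1/2) * (x ^ 2 - m)⁻¹)
          = κ / M * ((1/2) * ((x ^ 2)⁻¹ - (y ^ 2)⁻¹) + (1/2) * ((x ^ 2 - m)⁻¹ - (y ^ 2 - m)⁻¹)) := by
        ring
      rw [e]
      have hδ1 : δ⁻¹ = 1 / δ := (one_div δ).symm
      refine mul_le_mul_of_nonneg_left ?_ hκM
      rcases hsign with hs | hs
      · have hxs : δ < x ^ 2 - m := by have := hs x hxIcc; linarith
        have hys : (0:ℝ) < y ^ 2 - m := by have := hs y hyIcc; linarith [hδ]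
        have h3 : (x ^ 2 - m)⁻¹ ≤ δ⁻¹ := inv_anti₀ hδ hxs.le
        have h4 : (0:ℝ) ≤ (y ^ 2 - m)⁻¹ := (inv_pos.mpr hys).le
        linarith
      · have hxs : x ^ 2 - m < 0 := by have := hs x hxIcc; linarith [hδ]
        have hys : δ < m - y ^ 2 := by have := hs y hyIcc; linarith
        have h3 : (x ^ 2 - m)⁻¹ ≤ 0 := (inv_nonpos).mpr hxs.le
        have h4 : -(y ^ 2 - m)⁻¹ ≤ δ⁻¹ := by
          have e2 : -(y ^ 2 - m)⁻¹ = (m - y ^ 2)⁻¹ := by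
            rw [← inv_neg]
            ring_nf
          rw [e2]
          exact inv_anti₀ hδ hys.le
        linarith
    have hnormint : ‖∫ l in x..y, deriv q l * Complex.exp (Complex.I * (Φ l : ℂ))‖
        ≤ κ / M * (1 / δ) := by
      refine le_trans (intervalIntegral.norm_integral_le_integral_norm hxy) ?_
      have hmono : ∫ l in x..y, ‖deriv q l * Complex.exp (Complex.I * (Φ l : ℂ))‖
          ≤ ∫ l in x..y, H l := by
        apply intervalIntegral.integral_mono_on hxy (hq'int.norm) hHint
        intro l hl
        rw [norm_mul, hexp1, mul_one]
        exact hGH' l hl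
      calc ∫ l in x..y, ‖deriv q l * Complex.exp (Complex.I * (Φ l : ℂ))‖
          ≤ ∫ l in x..y, H l := hmono
        _ = P y - P x := hHeq
        _ ≤ κ / M * (1 / δ) := hPbound
    have hqx : ‖q x * Complex.exp (Complex.I * (Φ x : ℂ))‖ ≤ A / (C₁ * M * δ) := by
      rw [norm_mul, hexp1, mul_one]
      exact hqnorm x hx0 hxm
    have hqy : ‖q y * Complex.exp (Complex.I * (Φ y : ℂ))‖ ≤ A / (C₁ * M * δ) := by
      rw [norm_mul, hexp1, mul_one]
      exact hqnorm y hy0 hym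
    rw [hfeq, hε₀def]
    have step : ‖q y * Complex.exp (Complex.I * (Φ y : ℂ))
        - q x * Complex.exp (Complex.I * (Φ x : ℂ))
        - ∫ l in x..y, deriv q l * Complex.exp (Complex.I * (Φ l : ℂ))‖
        ≤ ‖q y * Complex.exp (Complex.I * (Φ y : ℂ))‖
          + ‖q x * Complex.exp (Complex.I * (Φ x : ℂ))‖
          + ‖∫ l in x..y, deriv q l * Complex.exp (Complex.I * (Φ l : ℂ))‖ := by
      refine le_trans (norm_sub_le _ _) ?_
      gcongr
      exact norm_sub_le _ _
    refine le_trans step ?_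
    linarith
  have hcomp1 : ‖∫ l in Ioo lam c1, f l‖ ≤ ε₀ := by
    rcases le_or_gt c1 lam with hlc | hlc
    · rw [Set.Ioo_eq_empty (not_lt.mpr hlc), setIntegral_empty, norm_zero]
      exact hε₀0
    · set w : ℝ := c1 - lam with hwdef
      have hw : 0 < w := by simp only [hwdef]; linarith
      have hw0 : 0 ≤ w := hw.le
      set sn : ℕ → Set ℝ := fun n => Ioc (lam + w / ((n:ℝ) + 2)) (c1 - w / ((n:ℝ) + 2))
        with hsndef
      have hfrac : ∀ n : ℕ, 0 < w / ((n:ℝ) + 2) := fun n => div_pos hw (by positivity)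
      have hmono : Monotone sn := by
        intro i j hij
        have hcast : (i:ℝ) ≤ (j:ℝ) := Nat.cast_le.mpr hij
        have hd : w / ((j:ℝ) + 2) ≤ w / ((i:ℝ) + 2) := by
          gcongr <;> linarith
        simp only [hsndef]
        exact Ioc_subset_Ioc (by linarith) (by linarith)
      have hunion : (⋃ n, sn n) = Ioo lam c1 := by
        apply Set.Subset.antisymm
        · apply Set.iUnion_subset
          intro n l hl
          exact ⟨by linarith [hfrac n, hl.1], by linarith [hfrac n, hl.2]⟩
        · intro l hl
          have hmin : 0 < min (l - lam) (c1 - l) := lt_min (by linarith [hl.1]) (by linarith [hl.2])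
          obtain ⟨n, hn⟩ := exists_nat_gt (w / min (l - lam) (c1 - l))
          refine Set.mem_iUnion.mpr ⟨n, ?_, ?_⟩
          · have hn' : w < (n:ℝ) * min (l - lam) (c1 - l) := by rwa [div_lt_iff₀ hmin] at hn
            have hkey : w / ((n:ℝ) + 2) < min (l - lam) (c1 - l) := by
              rw [div_lt_iff₀ (by positivity)]
              nlinarith [hmin]
            have := lt_of_lt_of_le hkey (min_le_left _ _)
            linarith
          · have hn' : w < (n:ℝ) * min (l - lam) (c1 - l) := by rwa [div_lt_iff₀ hmin] at hn
            have hkey : w / ((n:ℝ) + 2) < min (l - lam) (c1 - l) := by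
              rw [div_lt_iff₀ (by positivity)]
              nlinarith [hmin]
            have := lt_of_lt_of_le hkey (min_le_right _ _)
            linarith
      have hIntOn : IntegrableOn f (⋃ n, sn n) volume := by
        rw [hunion]
        exact hInt.mono_set (fun l hl => (hmem1 l hl).1)
      have htends := tendsto_setIntegral_of_monotone (fun n => measurableSet_Ioc) hmono hIntOn
      rw [hunion] at htends
      refine le_of_tendsto htends.norm (Eventually.of_forall ?_)
      intro n
      rcases le_or_gt (lam + w / ((n:ℝ) + 2)) (c1 - w / ((n:ℝ) + 2)) with hab | hab
      · rw [← intervalIntegral.integral_of_le hab]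
        apply key _ _ hab ?_ (Or.inr ?_)
        · intro l hl
          have h1 : lam < l := by linarith [hfrac n, hl.1]
          have h2 : l < c1 := by linarith [hfrac n, hl.2]
          obtain ⟨ha', hb', hc'⟩ := hmem1 l ⟨h1, h2⟩
          refine ⟨ha', hb', ?_⟩
          rw [abs_of_neg (by linarith [hδ] : l ^ 2 - m < 0)]
          linarith
        · intro l hl
          have h1 : lam < l := by linarith [hfrac n, hl.1]
          have h2 : l < c1 := by linarith [hfrac n, hl.2]
          exact (hmem1 l ⟨h1, h2⟩).2.2
      · rw [Set.Ioc_eq_empty (not_lt.mpr hab.le), setIntegral_empty, norm_zero]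
        exact hε₀0
  have hcomp2 : ‖∫ l in Ioi c2, f l‖ ≤ ε₀ := by
    set sn : ℕ → Set ℝ := fun n => Ioc (c2 + 1 / ((n:ℝ) + 1)) (c2 + 1 + (n:ℝ)) with hsndef
    have hfrac : ∀ n : ℕ, 0 < 1 / ((n:ℝ) + 1) := fun n => by positivity
    have hmono : Monotone sn := by
      intro i j hij
      have hcast : (i:ℝ) ≤ (j:ℝ) := Nat.cast_le.mpr hij
      have hd : 1 / ((j:ℝ) + 1) ≤ 1 / ((i:ℝ) + 1) := by
        gcongr <;> linarith
      simp only [hsndef]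
      exact Ioc_subset_Ioc (by linarith) (by linarith)
    have hunion : (⋃ n, sn n) = Ioi c2 := by
      apply Set.Subset.antisymm
      · apply Set.iUnion_subset
        intro n l hl
        exact lt_trans (by linarith [hfrac n]) hl.1
      · intro l hl
        have hl2 : 0 < l - c2 := by simpa using sub_pos.mpr (show c2 < l from hl)
        obtain ⟨n, hn⟩ := exists_nat_gt (max (1 / (l - c2)) (l - c2))
        have h1 : 1 / (l - c2) < (n:ℝ) := lt_of_le_of_lt (le_max_left _ _) hn
        have h2 : l - c2 < (n:ℝ) := lt_of_le_of_lt (le_max_right _ _) hn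
        have h3 : 1 < (n:ℝ) * (l - c2) := by rwa [div_lt_iff₀ hl2] at h1
        refine Set.mem_iUnion.mpr ⟨n, ?_, ?_⟩
        · rw [show c2 + 1 / ((n:ℝ) + 1) < l ↔ 1 / ((n:ℝ) + 1) < l - c2 by constructor <;> intro <;> linarith]
          rw [div_lt_iff₀ (by positivity)]
          have e : (l - c2) * ((n:ℝ) + 1) = (n:ℝ) * (l - c2) + (l - c2) := by ring
          rw [e]
          linarith
        · linarith
    have hIntOn : IntegrableOn f (⋃ n, sn n) volume := by
      rw [hunion]
      exact hInt.mono_set (fun l hl => (hmem2 l hl).1)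
    have htends := tendsto_setIntegral_of_monotone (fun n => measurableSet_Ioc) hmono hIntOn
    rw [hunion] at htends
    refine le_of_tendsto htends.norm (Eventually.of_forall ?_)
    intro n
    have hab : c2 + 1 / ((n:ℝ) + 1) ≤ c2 + 1 + (n:ℝ) := by
      have h1 : 1 / ((n:ℝ) + 1) ≤ 1 := by
        rw [div_le_one (by positivity)]
        linarith [(Nat.cast_nonneg n : (0:ℝ) ≤ (n:ℝ))]
      linarith [(Nat.cast_nonneg n : (0:ℝ) ≤ (n:ℝ))]
    rw [← intervalIntegral.integral_of_le hab]
    apply key _ _ hab ?_ (Or.inl ?_)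
    · intro l hl
      have h1 : c2 < l := by linarith [hfrac n, hl.1]
      obtain ⟨ha', hb', hc'⟩ := hmem2 l h1
      refine ⟨ha', hb', ?_⟩
      rw [abs_of_pos (by linarith [hδ] : 0 < l ^ 2 - m)]
      linarith
    · intro l hl
      have h1 : c2 < l := by linarith [hfrac n, hl.1]
      exact (hmem2 l h1).2.2
  have hnear : ‖∫ l in Ioi 0 \ (Ioo lam c1 ∪ Ioi c2), f l‖ ≤ 3 / 2 * A * δ := by
    have hT1sub : Ioc (0:ℝ) lam ⊆ Ioi 0 := fun l hl => hl.1
    have hT2sub : Icc c1 v ∩ Ioi 0 ⊆ Ioi (0:ℝ) := fun l hl => hl.2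
    have hTsub : Ioc (0:ℝ) lam ∪ (Icc c1 v ∩ Ioi 0) ⊆ Ioi (0:ℝ) := by
      rintro l (hl | hl)
      · exact hT1sub hl
      · exact hT2sub hl
    have hNsub : Ioi 0 \ (Ioo lam c1 ∪ Ioi c2) ⊆ Ioc 0 lam ∪ (Icc c1 v ∩ Ioi 0) := by
      rintro l ⟨hl0, hlU⟩
      rw [Set.mem_union] at hlU
      push_neg at hlU
      obtain ⟨h1, h2⟩ := hlU
      rcases le_or_gt l lam with h3 | h3
      · exact Or.inl ⟨hl0, h3⟩
      · have h4 : c1 ≤ l := by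
          by_contra h
          exact h1 ⟨h3, lt_of_not_ge h⟩
        have h5 : l ≤ c2 := not_lt.mp h2
        have h6 : l ≤ v := by
          rcases max_cases (m + δ) δ with ⟨he, _⟩ | ⟨he, _⟩
          · have he2 : c2 = v := by
              rw [hc2def, hvdef]
              exact congrArg Real.sqrt he
            rw [he2] at h5
            exact h5
          · exfalso
            have he2 : c2 = lam := by
              rw [hc2def, hlamdef]
              exact congrArg Real.sqrt he
            rw [he2] at h5
            linarith
        exact Or.inr ⟨⟨h4, h6⟩, hl0⟩
    have hnorm_nn : (0 : ℝ → ℝ) ≤ᵐ[volume.restrict (Ioc (0:ℝ) lam ∪ (Icc c1 v ∩ Ioi 0))]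
        fun l => ‖f l‖ := Eventually.of_forall fun l => by
          rw [Pi.zero_apply]; exact norm_nonneg _
    have hintT : IntegrableOn (fun l => ‖f l‖) (Ioc (0:ℝ) lam ∪ (Icc c1 v ∩ Ioi 0)) volume :=
      IntegrableOn.mono_set hInt.norm hTsub
    have hAlint : ∀ p r : ℝ, p ≤ r → IntegrableOn (fun l => A * l) (Ioc p r) volume :=
      fun p r hpr => (intervalIntegrable_iff_integrableOn_Ioc_of_le hpr).mp
        ((continuous_const.mul continuous_id).intervalIntegrable p r)
    have hb1 : ∫ l in Ioc (0:ℝ) lam, ‖f l‖ ≤ A * (δ / 2) := by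
      have step1 : ∫ l in Ioc (0:ℝ) lam, ‖f l‖ ≤ ∫ l in Ioc (0:ℝ) lam, A * l := by
        apply setIntegral_mono_on (IntegrableOn.mono_set hInt.norm hT1sub) (hAlint 0 lam hlam0.le)
          measurableSet_Ioc
        intro l hl
        rw [hfn]
        exact hAl l hl.1
      have step2 : ∫ l in Ioc (0:ℝ) lam, A * l = A * (δ / 2) := by
        rw [← intervalIntegral.integral_of_le hlam0.le, intervalIntegral.integral_const_mul,
          integral_id, hlam2]
        ring
      linarith
    have hIccint : IntegrableOn (fun l => A * l) (Icc c1 v) volume := by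
      rw [integrableOn_Icc_iff_integrableOn_Ioc]
      exact hAlint c1 v hc1v
    have hvc : v ^ 2 - c1 ^ 2 ≤ 2 * δ := by
      rcases le_or_gt 0 (m - δ) with hmd | hmd
      · have h1 : c1 ^ 2 = m - δ := by rw [hc1def]; exact Real.sq_sqrt hmd
        have h2 : v ^ 2 = m + δ := by rw [hvdef]; exact Real.sq_sqrt (by linarith)
        linarith
      · have h1 : 0 ≤ c1 ^ 2 := sq_nonneg _
        have h2 : v ^ 2 ≤ 2 * δ := by
          have h3 : v ≤ Real.sqrt (2 * δ) := by
            rw [hvdef]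
            exact Real.sqrt_le_sqrt (by linarith)
          calc v ^ 2 ≤ Real.sqrt (2 * δ) ^ 2 := by
                have hv0 : 0 ≤ v := Real.sqrt_nonneg _
                nlinarith
            _ = 2 * δ := Real.sq_sqrt (by linarith)
        linarith
    have hb2 : ∫ l in Icc c1 v ∩ Ioi 0, ‖f l‖ ≤ A * δ := by
      have step1 : ∫ l in Icc c1 v ∩ Ioi 0, ‖f l‖ ≤ ∫ l in Icc c1 v ∩ Ioi 0, A * l := by
        apply setIntegral_mono_on (IntegrableOn.mono_set hInt.norm hT2sub)
          (hIccint.mono_set inter_subset_left)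
          (measurableSet_Icc.inter measurableSet_Ioi)
        intro l hl
        rw [hfn]
        exact hAl l hl.2
      have step2 : ∫ l in Icc c1 v ∩ Ioi 0, A * l ≤ ∫ l in Icc c1 v, A * l := by
        apply setIntegral_mono_set hIccint
        · rw [EventuallyLE, ae_restrict_iff' measurableSet_Icc]
          exact Eventually.of_forall fun l hl => mul_nonneg hA0 (le_trans hc10 hl.1)
        · exact HasSubset.Subset.eventuallyLE inter_subset_left
      have step3 : ∫ l in Icc c1 v, A * l = A * ((v ^ 2 - c1 ^ 2) / 2) := by
        rw [integral_Icc_eq_integral_Ioc, ← intervalIntegral.integral_of_le hc1v,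
          intervalIntegral.integral_const_mul, integral_id]
      have step4 : A * ((v ^ 2 - c1 ^ 2) / 2) ≤ A * δ := by
        apply mul_le_mul_of_nonneg_left ?_ hA0
        linarith
      linarith
    calc ‖∫ l in Ioi 0 \ (Ioo lam c1 ∪ Ioi c2), f l‖
        ≤ ∫ l in Ioi 0 \ (Ioo lam c1 ∪ Ioi c2), ‖f l‖ := norm_integral_le_integral_norm _
      _ ≤ ∫ l in Ioc (0:ℝ) lam ∪ (Icc c1 v ∩ Ioi 0), ‖f l‖ :=
          setIntegral_mono_set hintT hnorm_nn (HasSubset.Subset.eventuallyLE hNsub)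
      _ = (∫ l in Ioc (0:ℝ) lam, ‖f l‖)
          + ∫ l in (Icc c1 v ∩ Ioi 0) \ Ioc (0:ℝ) lam, ‖f l‖ := by
          rw [← Set.union_diff_self]
          exact setIntegral_union disjoint_sdiff_self_right
            (((measurableSet_Icc.inter measurableSet_Ioi)).diff measurableSet_Ioc)
            (IntegrableOn.mono_set hInt.norm hT1sub)
            ((IntegrableOn.mono_set hInt.norm hT2sub).mono_set diff_subset)
      _ ≤ (∫ l in Ioc (0:ℝ) lam, ‖f l‖) + ∫ l in Icc c1 v ∩ Ioi 0, ‖f l‖ := by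
          apply add_le_add le_rfl
          apply setIntegral_mono_set (IntegrableOn.mono_set hInt.norm hT2sub)
            (Eventually.of_forall fun l => by rw [Pi.zero_apply]; exact norm_nonneg _)
            (HasSubset.Subset.eventuallyLE diff_subset)
      _ ≤ A * (δ / 2) + A * δ := add_le_add hb1 hb2
      _ ≤ 3 / 2 * A * δ := by linarith
  -- assembly
  have hUsub : Ioo lam c1 ∪ Ioi c2 ⊆ Ioi (0:ℝ) := by
    rintro l (hl | hl)
    · exact (hmem1 l hl).1
    · exact (hmem2 l hl).1
  have hdisj2 : Disjoint (Ioo lam c1) (Ioi c2) := by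
    rw [Set.disjoint_left]
    rintro l hl1 hl2
    exact absurd (lt_of_lt_of_le hl1.2 hc1c2) (not_lt.mpr hl2.le)
  have hdisj1 : Disjoint (Ioi 0 \ (Ioo lam c1 ∪ Ioi c2)) (Ioo lam c1 ∪ Ioi c2) :=
    disjoint_sdiff_self_left
  have hmeasU : MeasurableSet (Ioo lam c1 ∪ Ioi c2) :=
    measurableSet_Ioo.union measurableSet_Ioi
  have hsplit : ∫ l in Ioi (0:ℝ), f l = (∫ l in Ioi 0 \ (Ioo lam c1 ∪ Ioi c2), f l)
      + ((∫ l in Ioo lam c1, f l) + ∫ l in Ioi c2, f l) := by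
    rw [← setIntegral_union hdisj2 measurableSet_Ioi
      (hInt.mono_set (fun l hl => hUsub (Or.inl hl)))
      (hInt.mono_set (fun l hl => hUsub (Or.inr hl)))]
    rw [← setIntegral_union hdisj1 hmeasU (hInt.mono_set diff_subset) (hInt.mono_set hUsub)]
    rw [Set.diff_union_of_subset hUsub]
  calc ‖∫ l in Ioi (0:ℝ), f l‖
      ≤ 3 / 2 * A * δ + (ε₀ + ε₀) := by
        rw [hsplit]
        refine le_trans (norm_add_le _ _) ?_
        gcongr
        exact le_trans (norm_add_le _ _) (by gcongr)
    _ ≤ (2 + 6 / C₁ + 9 * C₂ / C₁ ^ 2) * δ * (A + B) := by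
        have e : ε₀ = 2 * A * δ / C₁ + κ * δ := by
          rw [hε₀def]
          have e1 : A / (C₁ * M * δ) = A * δ / C₁ := by
            rw [div_eq_div_iff (by positivity : (0:ℝ) < C₁ * M * δ).ne' hC₁.ne']
            linear_combination (-(A * C₁)) * hMδ
          have e2 : κ / M * (1 / δ) = κ * δ := by
            rw [div_mul_div_comm, mul_one, div_eq_iff (by positivity : (0:ℝ) < M * δ).ne']
            linear_combination (-κ) * hMδ
          rw [e1, e2]; ring
        rw [e, hκdef]
        have final : 3 / 2 * A + 2 * (2 * A / C₁ + (B / (2 * C₁) + 3 * A * C₂ / C₁ ^ 2))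
            ≤ (2 + 6 / C₁ + 9 * C₂ / C₁ ^ 2) * (A + B) := by
          rw [← sub_nonneg]
          have e3 : (2 + 6 / C₁ + 9 * C₂ / C₁ ^ 2) * (A + B)
              - (3 / 2 * A + 2 * (2 * A / C₁ + (B / (2 * C₁) + 3 * A * C₂ / C₁ ^ 2)))
              = (A * C₁ ^ 2 + 4 * B * C₁ ^ 2 + 4 * A * C₁ + 10 * B * C₁ + 6 * A * C₂
                + 18 * B * C₂) / (2 * C₁ ^ 2) := by
            field_simp
            ring
          rw [e3]
          positivity
        calc 3 / 2 * A * δ + (2 * A * δ / C₁ + κ * δ + (2 * A * δ / C₁ + κ * δ))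
            = (3 / 2 * A + 2 * (2 * A / C₁ + κ)) * δ := by ring
          _ ≤ ((2 + 6 / C₁ + 9 * C₂ / C₁ ^ 2) * (A + B)) * δ := by
              apply mul_le_mul_of_nonneg_right ?_ hδ.le
              rw [hκdef]; exact final
          _ = (2 + 6 / C₁ + 9 * C₂ / C₁ ^ 2) * δ * (A + B) := by ring
    _ = (2 + 6 / C₁ + 9 * C₂ / C₁ ^ 2) * M ^ (-(1:ℝ)/2) * (A + B) := by rw [hδdef]
end
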